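/- arXiv:2107.02370 — 9 statements merged into one kernel-verified Lean document; each statement's English description precedes it below -/
import Mathlib

section
/- If $G$ is a $K_{t+1}$-free $r$-partite graph with parts of size $n$, then $\delta(G) \le (r - r/t)n$. -/
open scoped Classical

/-- `G` is an `r`-partite graph on `Fin r × Fin n` with parts the fibers of `Prod.fst`. -/
def IsPartite {r n : ℕ} (G : SimpleGraph (Fin r × Fin n)) : Prop :=
  ∀ v w, G.Adj v w → v.1 ≠ w.1

/-- If `G` is a `K_{t+1}`-free `r`-partite graph with parts of size `n`,
then `δ(G) ≤ (r - r/t)·n`. -/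
theorem stmt1 (n r t : ℕ) (hn : 1 ≤ n) (ht : 2 ≤ t) (htr : t < r)
    (G : SimpleGraph (Fin r × Fin n)) (hp : IsPartite G)
    (hK : G.CliqueFree (t + 1)) :
    (G.minDegree : ℚ) ≤ ((r : ℚ) - (r : ℚ) / t) * n := by
  classical
  have hr : 0 < r := by omega
  set N : ℕ := Fintype.card (Fin r × Fin n) with hNdef
  have hNval : N = r * n := by simp [hNdef]
  -- pick a maximum-cardinality clique
  have hne : (Finset.univ.filter fun C : Finset (Fin r × Fin n) => G.IsClique C).Nonempty := by
    refine ⟨{(⟨0, hr⟩, ⟨0, hn⟩)}, ?_⟩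
    simp [SimpleGraph.isClique_singleton]
  obtain ⟨C, hCmem, hCmax⟩ :=
    Finset.exists_max_image _ (fun C : Finset (Fin r × Fin n) => C.card) hne
  have hC : G.IsClique C := by simpa using hCmem
  -- C is nonempty
  have hC1 : 1 ≤ C.card := by
    have := hCmax {(⟨0, hr⟩, ⟨0, hn⟩)} (by simp [SimpleGraph.isClique_singleton])
    simpa using this
  -- C has at most t elements
  have hCt : C.card ≤ t := by
    by_contra h
    push_neg at h
    obtain ⟨D, hDC, hDcard⟩ := Finset.exists_subset_card_eq (by omega : t + 1 ≤ C.card)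
    exact hK D ⟨hC.subset hDC, hDcard⟩
  -- every vertex is a non-neighbor of some vertex of C (by maximality)
  have hcover : ∀ w : Fin r × Fin n, ∃ v ∈ C, ¬ G.Adj v w := by
    intro w
    by_contra h
    push_neg at h
    have hwC : w ∉ C := fun hw => (G.loopless.irrefl w) (h w hw)
    have hclique : G.IsClique (insert w C) :=
      hC.insert fun b hb _ => (h b hb).symm
    have := hCmax (insert w C) (by simp [hclique])
    rw [Finset.card_insert_of_notMem hwC] at this
    omega
  -- counting: N ≤ ∑_{v ∈ C} (N - deg v)
  have hdegle : ∀ v : Fin r × Fin n, G.degree v ≤ N := fun v => by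
    show (G.neighborFinset v).card ≤ N
    rw [hNdef]
    exact Finset.card_le_univ _
  have hsub : Finset.univ ⊆ C.biUnion fun v => Finset.univ.filter fun w => ¬ G.Adj v w := by
    intro w _
    obtain ⟨v, hv, hnadj⟩ := hcover w
    exact Finset.mem_biUnion.mpr ⟨v, hv, by simp [hnadj]⟩
  have hcards : ∀ v : Fin r × Fin n,
      (Finset.univ.filter fun w => ¬ G.Adj v w).card = N - G.degree v := by
    intro v
    have h1 : (Finset.univ.filter fun w => G.Adj v w).card = G.degree v := by
      rw [← SimpleGraph.neighborFinset_eq_filter]; rfl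
    have h2 := Finset.card_filter_add_card_filter_not
      (s := (Finset.univ : Finset (Fin r × Fin n))) (p := fun w => G.Adj v w)
    simp only [Finset.card_univ] at h2
    omega
  have hNle : N ≤ ∑ v ∈ C, (N - G.degree v) := by
    calc N = (Finset.univ : Finset (Fin r × Fin n)).card := by simp [hNdef]
    _ ≤ (C.biUnion fun v => Finset.univ.filter fun w => ¬ G.Adj v w).card :=
        Finset.card_le_card hsub
    _ ≤ ∑ v ∈ C, (Finset.univ.filter fun w => ¬ G.Adj v w).card := Finset.card_biUnion_le
    _ = ∑ v ∈ C, (N - G.degree v) := by simp [hcards]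
  -- hence N + ∑ deg ≤ |C| * N, and ∑ deg ≥ |C| * δ
  have hsumdeg : ∑ v ∈ C, (N - G.degree v) + ∑ v ∈ C, G.degree v = C.card * N := by
    rw [← Finset.sum_add_distrib]
    rw [Finset.sum_congr rfl fun v _ => Nat.sub_add_cancel (hdegle v)]
    simp [mul_comm]
  have hmindeg : C.card * G.minDegree ≤ ∑ v ∈ C, G.degree v := by
    calc C.card * G.minDegree = ∑ _v ∈ C, G.minDegree := by simp [mul_comm]
    _ ≤ ∑ v ∈ C, G.degree v := Finset.sum_le_sum fun v _ => G.minDegree_le_degree v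
  have hkey : N + C.card * G.minDegree ≤ C.card * N := by omega
  -- pass to ℚ
  set s : ℕ := C.card
  have hsQ : (0:ℚ) < s := by exact_mod_cast hC1
  have htQ : (0:ℚ) < t := by positivity
  have hNQ : (0:ℚ) ≤ N := by positivity
  have hkeyQ : (N:ℚ) + s * G.minDegree ≤ s * N := by exact_mod_cast hkey
  have hδ : (G.minDegree : ℚ) ≤ (N:ℚ) - N / s := by
    rw [← mul_le_mul_iff_of_pos_right hsQ]
    have heq : ((N:ℚ) - N/s) * s = s*N - N := by field_simp
    rw [heq]
    nlinarith [hkeyQ]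
  have hstep : (N:ℚ) - N / s ≤ (N:ℚ) - N / t := by
    have : (N:ℚ) / t ≤ N / s := by
      apply div_le_div_of_nonneg_left hNQ hsQ
      exact_mod_cast hCt
    linarith
  have hfinal : (N:ℚ) - N / t = ((r : ℚ) - (r : ℚ) / t) * n := by
    have : (N:ℚ) = r * n := by exact_mod_cast hNval
    rw [this]; field_simp
  linarith
end

section
/- The complete $t$-partite graph on $rn$ vertices with parts of size $\lceil r/t \rceil n$ or $\lfloor r/t \rfloor n$, viewed as an $r$-partite graph with parts of size $n$, is $K_{t+1}$-free and has minimum degree at least $(r - \lceil r/t \rceil)n$; hence $f(n,r,t+1) \ge (r - \lceil r/t \rceil)n$. -/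
open scoped Classical

/-- `f n r c` : the largest minimum degree among `r`-partite graphs with parts of
size `n` containing no copy of `K_c`. -/
noncomputable def f (n r c : ℕ) : ℕ :=
  sSup {d | ∃ G : SimpleGraph (Fin r × Fin n),
    IsPartite G ∧ G.CliqueFree c ∧ G.minDegree = d}


/-- The `n`-blow-up of the Turán graph `T_t(r)`, viewed as an `r`-partite graph with parts
of size `n`, is `K_{t+1}`-free with minimum degree at least `(r - ⌈r/t⌉)·n`; hence
`f(n,r,t+1) ≥ (r - ⌈r/t⌉)·n`. -/
theorem stmt2 (n r t : ℕ) (hn : 1 ≤ n) (ht : 2 ≤ t) (htr : t < r) :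
    (∃ G : SimpleGraph (Fin r × Fin n), IsPartite G ∧ G.CliqueFree (t + 1) ∧
      (r - r ⌈/⌉ t) * n ≤ G.minDegree) ∧
    (r - r ⌈/⌉ t) * n ≤ f n r (t + 1) := by
  have ht0 : 0 < t := by omega
  have hr0 : 0 < r := by omega
  -- the graph
  set G : SimpleGraph (Fin r × Fin n) :=
    { Adj := fun v w => v.1.val % t ≠ w.1.val % t
      symm := ⟨fun v w h => Ne.symm h⟩
      loopless := ⟨fun v h => h rfl⟩ } with hG
  have hadj : ∀ v w, G.Adj v w ↔ v.1.val % t ≠ w.1.val % t := fun v w => Iff.rfl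
  have hpart : IsPartite G := by
    intro v w h hvw
    exact h (by rw [hvw])
  have hcf : G.CliqueFree (t + 1) := by
    intro s hs
    have hinj : Set.InjOn (fun v : Fin r × Fin n => v.1.val % t) s := by
      intro a ha b hb hab
      by_contra hne
      exact (hs.1 ha hb hne) hab
    have hmaps : ∀ v ∈ s, v.1.val % t ∈ Finset.range t := by
      intro v _
      exact Finset.mem_range.mpr (Nat.mod_lt _ ht0)
    have := Finset.card_le_card_of_injOn _ hmaps hinj
    rw [hs.2, Finset.card_range] at this
    omega
  letI inst : DecidableRel G.Adj := fun a b => Classical.propDecidable (G.Adj a b)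
  -- degree bound
  have hdeg : ∀ v : Fin r × Fin n, (r - r ⌈/⌉ t) * n ≤ G.degree v := by
    intro v
    rw [SimpleGraph.degree]
    have hset : G.neighborFinset v =
        (Finset.univ.filter (fun i : Fin r => ¬ i.val % t = v.1.val % t)) ×ˢ Finset.univ := by
      ext w
      simp [SimpleGraph.mem_neighborFinset, hadj, Finset.mem_product, ne_comm]
    rw [hset, Finset.card_product, Finset.card_univ, Fintype.card_fin]
    have hcardB : (Finset.univ.filter (fun i : Fin r => i.val % t = v.1.val % t)).card
        ≤ r ⌈/⌉ t := by
      rw [← Finset.card_range (r ⌈/⌉ t)]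
      apply Finset.card_le_card_of_injOn (fun i : Fin r => i.val / t)
      · intro i hi
        simp only [Finset.mem_coe, Finset.mem_filter] at hi
        refine Finset.mem_range.mpr ?_
        rw [Nat.ceilDiv_eq_add_pred_div]
        have h1 : (i.val + t) / t = i.val / t + 1 := Nat.add_div_right _ ht0
        have h2 : i.val + t ≤ r + t - 1 := by have := i.isLt; omega
        calc i.val / t < i.val / t + 1 := Nat.lt_succ_self _
          _ = (i.val + t) / t := h1.symm
          _ ≤ (r + t - 1) / t := Nat.div_le_div_right h2
      · intro a ha b hb hab
        simp only [Finset.mem_coe, Finset.mem_filter] at ha hb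
        simp only at hab
        have : a.val = b.val := by
          conv_lhs => rw [← Nat.div_add_mod a.val t]
          conv_rhs => rw [← Nat.div_add_mod b.val t]
          rw [hab, ha.2, hb.2]
        exact Fin.ext this
    have hfilter : (Finset.univ.filter (fun i : Fin r => ¬ i.val % t = v.1.val % t)).card
        = r - (Finset.univ.filter (fun i : Fin r => i.val % t = v.1.val % t)).card := by
      rw [Finset.filter_not, Finset.card_sdiff_of_subset (Finset.filter_subset _ _),
        Finset.card_univ, Fintype.card_fin]
    rw [hfilter]
    exact Nat.mul_le_mul_right n (by omega)
  have : Nonempty (Fin r × Fin n) := ⟨⟨⟨0, hr0⟩, ⟨0, hn⟩⟩⟩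
  have hmin : (r - r ⌈/⌉ t) * n ≤ G.minDegree :=
    SimpleGraph.le_minDegree_of_forall_le_degree G _ hdeg
  refine ⟨⟨G, hpart, hcf, hmin⟩, ?_⟩
  have hbdd : BddAbove {d | ∃ H : SimpleGraph (Fin r × Fin n),
      IsPartite H ∧ H.CliqueFree (t + 1) ∧ H.minDegree = d} := by
    refine ⟨r * n, ?_⟩
    rintro d ⟨H, -, -, rfl⟩
    have h1 : H.minDegree ≤ H.degree (Classical.arbitrary _) :=
      SimpleGraph.minDegree_le_degree H _
    have h2 : H.degree (Classical.arbitrary _) < Fintype.card (Fin r × Fin n) :=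
      SimpleGraph.degree_lt_card_verts (G := H) _
    simp only [Fintype.card_prod, Fintype.card_fin] at h2
    omega
  exact le_trans hmin (le_csSup hbdd ⟨G, hpart, hcf, rfl⟩)
end

section
/- If $t$ divides $r$, then $f(n,r,t+1) = (r - r/t)n$. -/
open scoped Classical

open Finset SimpleGraph

lemma count_range_mod (t m a : ℕ) (ht : 0 < t) (ha : a < t) :
    ((Finset.range (t * m)).filter (fun i => i % t = a)).card = m := by
  have h := Finset.card_bij' (s := (Finset.range (t * m)).filter (fun i => i % t = a))
    (t := Finset.range m) (fun i _ => i / t) (fun b _ => t * b + a)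
    (by
      intro i hi
      simp only [Finset.mem_filter, Finset.mem_range] at hi ⊢
      exact Nat.div_lt_of_lt_mul (by omega))
    (by
      intro b hb
      simp only [Finset.mem_range] at hb
      simp only [Finset.mem_filter, Finset.mem_range]
      refine ⟨?_, by simp [Nat.mul_add_mod, Nat.mod_eq_of_lt ha]⟩
      have h1 : t * (b + 1) = t * b + t := by ring
      have h2 : t * (b + 1) ≤ t * m := Nat.mul_le_mul_left t (by omega)
      omega)
    (by
      intro i hi
      simp only [Finset.mem_filter, Finset.mem_range] at hi
      show t * (i / t) + a = i
      rw [← hi.2]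
      exact Nat.div_add_mod i t)
    (by
      intro b hb
      show (t * b + a) / t = b
      rw [Nat.mul_add_div ht, Nat.div_eq_of_lt ha]
      omega)
  simpa using h

lemma count_fin_mod (r t a : ℕ) (ht : 0 < t) (ha : a < t) (hdvd : t ∣ r) :
    (Finset.univ.filter (fun j : Fin r => (j : ℕ) % t = a)).card = r / t := by
  obtain ⟨m, rfl⟩ := hdvd
  rw [Nat.mul_div_cancel_left _ ht]
  have hb : (Finset.univ.filter (fun j : Fin (t*m) => (j : ℕ) % t = a)).card
      = ((Finset.range (t*m)).filter (fun i => i % t = a)).card := by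
    refine Finset.card_nbij (fun j : Fin (t*m) => (j : ℕ)) ?_ ?_ ?_
    · intro j hj
      simp only [Finset.mem_coe, Finset.mem_filter, Finset.mem_univ, true_and,
        Finset.mem_range] at hj ⊢
      exact ⟨j.isLt, hj⟩
    · intro x hx y hy hxy
      exact Fin.val_injective hxy
    · intro i hi
      simp only [Finset.mem_coe, Finset.mem_filter, Finset.mem_range] at hi
      exact ⟨⟨i, hi.1⟩, by simp [hi.2], rfl⟩
  rw [hb, count_range_mod t m a ht ha]

/-- the construction: complete multipartite graph by residue class of the part mod `t`. -/
def myG (n r t : ℕ) : SimpleGraph (Fin r × Fin n) where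
  Adj v w := ((v.1 : ℕ) % t ≠ (w.1 : ℕ) % t)
  symm := ⟨fun v w h => h.symm⟩
  loopless := ⟨fun v h => h rfl⟩

@[simp] lemma myG_adj (n r t : ℕ) (v w : Fin r × Fin n) :
    (myG n r t).Adj v w ↔ (v.1 : ℕ) % t ≠ (w.1 : ℕ) % t := Iff.rfl

lemma myG_partite (n r t : ℕ) : IsPartite (myG n r t) := by
  intro v w h hvw
  exact h (by rw [hvw])

lemma myG_cliqueFree (n r t : ℕ) (ht : 0 < t) : (myG n r t).CliqueFree (t + 1) := by
  intro s hs
  have hinj : Set.InjOn (fun v : Fin r × Fin n => (v.1 : ℕ) % t) s := by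
    intro x hx y hy hxy
    by_contra hne
    exact (hs.1 hx hy hne) hxy
  have hsub : ∀ v ∈ s, (fun v : Fin r × Fin n => (v.1 : ℕ) % t) v ∈ Finset.range t := by
    intro v _
    exact Finset.mem_range.mpr (Nat.mod_lt _ ht)
  have := Finset.card_le_card_of_injOn _ hsub hinj
  rw [hs.2, Finset.card_range] at this
  omega

lemma myG_degree (n r t : ℕ) (ht : 0 < t) (hdvd : t ∣ r) (v : Fin r × Fin n) :
    (myG n r t).degree v = (r - r / t) * n := by
  classical
  have h1 : (myG n r t).neighborFinset v
      = (Finset.univ.filter (fun j : Fin r => ¬ ((j : ℕ) % t = (v.1 : ℕ) % t))) ×ˢ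
        (Finset.univ : Finset (Fin n)) := by
    ext w
    simp only [SimpleGraph.mem_neighborFinset, myG_adj, Finset.mem_product, Finset.mem_filter,
      Finset.mem_univ, true_and, and_true]
    exact ne_comm
  rw [SimpleGraph.degree, h1, Finset.card_product, Finset.card_univ, Fintype.card_fin]
  congr 1
  have h2 : (Finset.univ.filter (fun j : Fin r => ¬ ((j : ℕ) % t = (v.1 : ℕ) % t))).card
      = r - (Finset.univ.filter (fun j : Fin r => (j : ℕ) % t = (v.1 : ℕ) % t)).card := by
    rw [Finset.filter_not, Finset.card_sdiff_of_subset (Finset.filter_subset _ _), Finset.card_univ,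
      Fintype.card_fin]
  have h3 := count_fin_mod r t ((v.1 : ℕ) % t) ht (Nat.mod_lt _ ht) hdvd
  rw [h2, h3]

lemma upper_bound (n r t : ℕ) (hn : 1 ≤ n) (ht : 2 ≤ t) (htr : t < r) (hdvd : t ∣ r)
    (G : SimpleGraph (Fin r × Fin n)) (hG : G.CliqueFree (t + 1)) :
    G.minDegree ≤ (r - r / t) * n := by
  classical
  by_contra hcon
  push_neg at hcon
  set m := r / t with hm
  have hrm : r = t * m := (Nat.mul_div_cancel' hdvd).symm
  have hm1 : 1 ≤ m := Nat.one_le_div_iff (by omega) |>.mpr (le_of_lt htr)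
  have hmr : m ≤ r := Nat.div_le_self r t
  have hN : Fintype.card (Fin r × Fin n) = r * n := by simp
  have hd : (r - m) * n + 1 ≤ G.minDegree := hcon
  -- greedy clique building
  have key : ∀ k, k ≤ t + 1 → ∃ s : Finset (Fin r × Fin n), G.IsNClique k s := by
    intro k hk
    induction k with
    | zero => exact ⟨∅, by simp⟩
    | succ k ih =>
      obtain ⟨s, hs⟩ := ih (by omega)
      set B := s.biUnion (fun v => (G.neighborFinset v)ᶜ) with hB
      have hBcard : B.card ≤ k * (m * n - 1) := by
        calc B.card ≤ ∑ v ∈ s, ((G.neighborFinset v)ᶜ).card := Finset.card_biUnion_le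
          _ ≤ s.card * (m * n - 1) := by
              apply Finset.sum_le_card_nsmul
              intro v hv
              have h1 : ((G.neighborFinset v)ᶜ).card = r * n - G.degree v := by
                rw [Finset.card_compl, hN, SimpleGraph.card_neighborFinset_eq_degree]
              have h2 : (r - m) * n + 1 ≤ G.degree v :=
                le_trans hd (G.minDegree_le_degree v)
              have h3 : (r - m) * n + m * n = r * n := by
                rw [← Nat.add_mul]; congr 1; omega
              omega
          _ = k * (m * n - 1) := by rw [hs.2]
      have hBlt : B.card < r * n := by
        have h4 : k * (m * n - 1) ≤ t * (m * n - 1) := Nat.mul_le_mul_right _ (by omega)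
        have h5 : t * (m * n - 1) + t = t * (m * n) := by
          rw [Nat.mul_sub_one]
          have : t ≤ t * (m * n) := Nat.le_mul_of_pos_right t (by positivity)
          omega
        have h6 : t * (m * n) = r * n := by rw [hrm]; ring
        omega
      have hBc : Bᶜ.Nonempty := by
        rw [← Finset.card_pos, Finset.card_compl, hN]
        omega
      obtain ⟨w, hw⟩ := hBc
      have hadj : ∀ v ∈ s, G.Adj w v := by
        intro v hv
        rw [Finset.mem_compl, hB, Finset.mem_biUnion] at hw
        push_neg at hw
        have := hw v hv
        rw [Finset.mem_compl, not_not, SimpleGraph.mem_neighborFinset] at this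
        exact this.symm
      exact ⟨insert w s, hs.insert hadj⟩
  obtain ⟨s, hs⟩ := key (t + 1) le_rfl
  exact hG s hs

/-- If `t` divides `r`, then `f(n,r,t+1) = (r - r/t)·n`. -/
theorem stmt3 (n r t : ℕ) (hn : 1 ≤ n) (ht : 2 ≤ t) (htr : t < r) (hdvd : t ∣ r) :
    f n r (t + 1) = (r - r / t) * n := by
  classical
  haveI : Nonempty (Fin r × Fin n) := ⟨(⟨0, by omega⟩, ⟨0, by omega⟩)⟩
  have ht0 : 0 < t := by omega
  have hmin : (myG n r t).minDegree = (r - r / t) * n := by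
    apply le_antisymm
    · have := (myG n r t).minDegree_le_degree (Classical.arbitrary _)
      rwa [myG_degree n r t ht0 hdvd] at this
    · apply SimpleGraph.le_minDegree_of_forall_le_degree
      intro v
      rw [myG_degree n r t ht0 hdvd]
  have hmem : (r - r / t) * n ∈ {d | ∃ G : SimpleGraph (Fin r × Fin n),
      IsPartite G ∧ G.CliqueFree (t + 1) ∧ G.minDegree = d} :=
    ⟨myG n r t, myG_partite n r t, myG_cliqueFree n r t ht0, hmin⟩
  have hub : ∀ d ∈ {d | ∃ G : SimpleGraph (Fin r × Fin n),
      IsPartite G ∧ G.CliqueFree (t + 1) ∧ G.minDegree = d}, d ≤ (r - r / t) * n := by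
    rintro d ⟨G, -, hGfree, rfl⟩
    exact upper_bound n r t hn ht htr hdvd G hGfree
  exact le_antisymm (csSup_le ⟨_, hmem⟩ hub) (le_csSup ⟨_, hub⟩ hmem)
end

section
/- Let $r > t \ge 2$ and $0 \le a \le t-1$ with $r \equiv -a \pmod t$. If $r \ge a(3t-1)$, then $f(n,r,t+1) = \delta(n,r,t)$ for all $n \ge 1$. -/
set_option maxHeartbeats 1000000

open scoped Classical

/-- `deltaP n r t` : the largest minimum degree among `r`-partite graphs with parts
of size `n` and chromatic number at most `t`. -/
noncomputable def deltaP (n r t : ℕ) : ℕ :=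
  sSup {d | ∃ G : SimpleGraph (Fin r × Fin n),
    IsPartite G ∧ G.chromaticNumber ≤ (t : ℕ∞) ∧ G.minDegree = d}

/-- Let `r > t ≥ 2` and `0 ≤ a ≤ t-1` with `r ≡ -a (mod t)`. If `r ≥ a(3t-1)`,
then (assuming the Andrásfai–Erdős–Sós theorem) `f(n,r,t+1) = δ(n,r,t)`. -/
theorem stmt8 (n r t a : ℕ) (hn : 1 ≤ n) (ht : 2 ≤ t) (htr : t < r)
    (ha : a ≤ t - 1) (hmod : t ∣ (r + a)) (hra : a * (3 * t - 1) ≤ r)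
    (hAES : ∀ G : SimpleGraph (Fin r × Fin n), G.CliqueFree (t + 1) →
      ((3 * t - 4 : ℚ) / (3 * t - 1)) * (r * n) < G.minDegree →
      G.chromaticNumber ≤ (t : ℕ∞)) :
    f n r (t + 1) = deltaP n r t := by
  have htpos : 0 < t := by omega
  haveI : Nonempty (Fin r × Fin n) := ⟨(⟨0, by omega⟩, ⟨0, by omega⟩)⟩
  set Q := (r + a) / t with hQdef
  have hQt : t * Q = r + a := Nat.mul_div_cancel' hmod
  have hQpos : 0 < Q := by
    rcases Nat.eq_zero_or_pos Q with h | h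
    · rw [h, Nat.mul_zero] at hQt; omega
    · exact h
  have hQr : Q ≤ r := by
    by_contra h
    push_neg at h
    have h2 : t * (r + 1) ≤ t * Q := Nat.mul_le_mul_left _ h
    have h3 : t * (r + 1) = t * r + t := by ring
    have h4 : r ≤ t * r := Nat.le_mul_of_pos_left r htpos
    omega
  -- the group map
  have hgdef : ∀ i : Fin r, (i : ℕ) / Q < t := by
    intro i
    have : (i : ℕ) < t * Q := by omega
    exact Nat.div_lt_iff_lt_mul hQpos |>.mpr (by omega)
  set g : Fin r → Fin t := fun i => ⟨(i : ℕ) / Q, hgdef i⟩ with hg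
  -- the construction
  set H : SimpleGraph (Fin r × Fin n) :=
    { Adj := fun v w => g v.1 ≠ g w.1
      symm := ⟨fun v w h => fun e => h e.symm⟩
      loopless := ⟨fun v h => h rfl⟩ } with hH
  have hHadj : ∀ v w, H.Adj v w ↔ g v.1 ≠ g w.1 := fun v w => Iff.rfl
  have hHpart : IsPartite H := by
    intro v w hvw h
    exact (hHadj v w).1 hvw (by rw [h])
  have hHcol : H.Colorable t := by
    refine ⟨SimpleGraph.Coloring.mk (fun v => g v.1) ?_⟩
    · intro v w hvw
      simpa using (hHadj v w).1 hvw
  have hHchrom : H.chromaticNumber ≤ (t : ℕ∞) := hHcol.chromaticNumber_le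
  -- fiber size bound
  have hfiber : ∀ k : Fin t, (Finset.univ.filter fun i : Fin r => g i = k).card ≤ Q := by
    intro k
    have := Finset.card_le_card_of_injOn (f := fun i : Fin r => (i : ℕ) % Q)
      (s := Finset.univ.filter fun i : Fin r => g i = k) (t := Finset.range Q)
      (fun i _ => Finset.mem_range.mpr (Nat.mod_lt _ hQpos))
      (by
        intro i hi j hj hij
        simp only [Finset.coe_filter, Set.mem_setOf_eq, hg] at hi hj
        have h1 : (i : ℕ) / Q = (j : ℕ) / Q := by
          have := hi.2.trans hj.2.symm
          simpa [Fin.ext_iff] using this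
        have hij' : (i : ℕ) % Q = (j : ℕ) % Q := hij
        have : (i : ℕ) = (j : ℕ) := by
          conv_lhs => rw [← Nat.div_add_mod (i : ℕ) Q]
          rw [h1, hij', Nat.div_add_mod]
        exact Fin.ext this)
    simpa using this
  -- degree lower bound for H
  have hHdeg : ∀ v, (r - Q) * n ≤ H.degree v := by
    intro v
    have hset : H.neighborFinset v =
        (Finset.univ.filter fun i : Fin r => g i ≠ g v.1) ×ˢ (Finset.univ : Finset (Fin n)) := by
      ext w
      simp [SimpleGraph.mem_neighborFinset, hHadj, Finset.mem_product, ne_comm]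
    have hdeg : H.degree v =
        (Finset.univ.filter fun i : Fin r => g i ≠ g v.1).card * n := by
      rw [SimpleGraph.degree, hset, Finset.card_product]
      simp
    rw [hdeg]
    have hsplit := Finset.card_filter_add_card_filter_not
      (s := (Finset.univ : Finset (Fin r))) (p := fun i : Fin r => g i = g v.1)
    have hcard : r - Q ≤ (Finset.univ.filter fun i : Fin r => g i ≠ g v.1).card := by
      have h1 := hfiber (g v.1)
      have h2 : (Finset.univ : Finset (Fin r)).card = r := by simp
      simp only [ne_eq]
      omega
    exact Nat.mul_le_mul_right n hcard
  have hHmin : (r - Q) * n ≤ H.minDegree :=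
    SimpleGraph.le_minDegree_of_forall_le_degree H _ hHdeg
  -- threshold bound
  have hthr : ((3 * t - 4 : ℚ) / (3 * t - 1)) * (r * n) ≤ ((r - Q) * n : ℕ) := by
    have h31 : (0 : ℚ) < 3 * (t : ℚ) - 1 := by
      have : (2 : ℚ) ≤ (t : ℚ) := by exact_mod_cast ht
      linarith
    rw [div_mul_eq_mul_div, div_le_iff₀ h31]
    have hQc : (t : ℚ) * Q = r + a := by exact_mod_cast hQt
    have key : a * (3 * t - 1) + a = a * (3 * t) := by
      rw [← Nat.mul_succ]; congr 1; omega
    have hA : (a : ℚ) * (3 * t) ≤ r + a := by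
      have : a * (3 * t) ≤ r + a := by omega
      exact_mod_cast this
    have hrac : (a : ℚ) * (3 * (t : ℚ) - 1) ≤ r := by nlinarith
    have hcast : (((r - Q) * n : ℕ) : ℚ) = ((r : ℚ) - Q) * n := by
      push_cast [Nat.cast_sub hQr]; ring
    rw [hcast]
    have ht' : (2 : ℚ) ≤ t := by exact_mod_cast ht
    have ht0 : (0 : ℚ) < t := by linarith
    have hn' : (0 : ℚ) ≤ n := by positivity
    have expand : ((r:ℚ) - Q) * n * (3 * t - 1) - (3 * t - 4) * (r * n)
        = (n * (r - a * (3 * (t:ℚ) - 1))) / t := by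
      field_simp
      linear_combination (1 - 3 * (t:ℚ)) * hQc
    have h0 : (0:ℚ) ≤ (n * (r - a * (3 * (t:ℚ) - 1))) / t :=
      div_nonneg (mul_nonneg hn' (by linarith)) (le_of_lt ht0)
    linarith
  -- bounded above
  have hbdd : ∀ G : SimpleGraph (Fin r × Fin n), G.minDegree ≤ r * n := by
    intro G
    have v : Fin r × Fin n := Classical.arbitrary _
    refine le_trans (G.minDegree_le_degree v) ?_
    have : G.degree v ≤ Fintype.card (Fin r × Fin n) := by
      rw [SimpleGraph.degree]
      exact Finset.card_le_univ _
    simpa using this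
  have hbddF : BddAbove {d | ∃ G : SimpleGraph (Fin r × Fin n),
      IsPartite G ∧ G.CliqueFree (t + 1) ∧ G.minDegree = d} :=
    ⟨r * n, fun d ⟨G, _, _, hd⟩ => hd ▸ hbdd G⟩
  have hbddD : BddAbove {d | ∃ G : SimpleGraph (Fin r × Fin n),
      IsPartite G ∧ G.chromaticNumber ≤ (t : ℕ∞) ∧ G.minDegree = d} :=
    ⟨r * n, fun d ⟨G, _, _, hd⟩ => hd ▸ hbdd G⟩
  have hneF : Set.Nonempty {d | ∃ G : SimpleGraph (Fin r × Fin n),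
      IsPartite G ∧ G.CliqueFree (t + 1) ∧ G.minDegree = d} :=
    ⟨_, ⟨⊥, fun v w h => absurd h (by simp), SimpleGraph.cliqueFree_bot (by omega), rfl⟩⟩
  have hneD : Set.Nonempty {d | ∃ G : SimpleGraph (Fin r × Fin n),
      IsPartite G ∧ G.chromaticNumber ≤ (t : ℕ∞) ∧ G.minDegree = d} :=
    ⟨_, ⟨H, hHpart, hHchrom, by congr!⟩⟩
  unfold f deltaP
  apply le_antisymm
  · apply csSup_le hneF
    rintro d ⟨G, hGpart, hGfree, hGd⟩
    by_cases hcase : ((3 * t - 4 : ℚ) / (3 * t - 1)) * (r * n) < (G.minDegree : ℚ)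
    · exact le_csSup hbddD ⟨G, hGpart, hAES G hGfree hcase, hGd⟩
    · push_neg at hcase
      have hd : (d : ℚ) ≤ ((r - Q) * n : ℕ) := le_trans (hGd ▸ hcase) hthr
      have hd' : d ≤ (r - Q) * n := by exact_mod_cast hd
      have hmem : H.minDegree ∈ {d | ∃ G : SimpleGraph (Fin r × Fin n),
          IsPartite G ∧ G.chromaticNumber ≤ (t : ℕ∞) ∧ G.minDegree = d} :=
        ⟨H, hHpart, hHchrom, by congr!⟩
      have hle : H.minDegree ≤ sSup {d | ∃ G : SimpleGraph (Fin r × Fin n),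
          IsPartite G ∧ G.chromaticNumber ≤ (t : ℕ∞) ∧ G.minDegree = d} :=
        le_csSup hbddD hmem
      exact le_trans hd' (le_trans hHmin hle)
  · apply csSup_le hneD
    rintro d ⟨G, hGpart, hGchrom, hGd⟩
    have hfree : G.CliqueFree (t + 1) :=
      (SimpleGraph.chromaticNumber_le_iff_colorable.mp hGchrom).cliqueFree (by omega)
    exact le_csSup hbddF ⟨G, hGpart, hfree, hGd⟩
end

section
/- Let $r \ge m, t \ge 2$ with $m(t-1) \le r \le mt-1$. Then there exists an $r$-partite graph $G$ with parts of size $n$ and chromatic number at most $t$ such that $\delta(G) = (r-1)n - (m-1)\lceil \frac{(r-1)n}{mt-2} \rceil$. In particular, $\delta(n,r,t) \ge (r-1)n - (m-1)\lceil \frac{(r-1)n}{mt-2} \rceil$. -/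
open scoped Classical

section Aux

private lemma card_filter_prod'' {r n : ℕ} (R : Fin r × Fin n → Prop)
    (P : Fin r → Prop) (Q : Fin n → Prop)
    [DecidablePred R] [DecidablePred P] [DecidablePred Q]
    (hR : ∀ u, R u ↔ P u.1 ∧ Q u.2) :
    (Finset.univ.filter R).card
      = ((Finset.univ : Finset (Fin r)).filter P).card *
        ((Finset.univ : Finset (Fin n)).filter Q).card := by
  classical
  have h1 : Finset.univ.filter R = Finset.univ.filter (fun u : Fin r × Fin n => P u.1 ∧ Q u.2) := by
    apply Finset.filter_congr
    intro u _
    exact hR u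
  rw [h1, ← Finset.univ_product_univ, Finset.filter_product, Finset.card_product]

private lemma card_filter_count {r : ℕ} (p : Fin r → Prop) [DecidablePred p] (S : Finset ℕ)
    (hS : ∀ x : ℕ, x ∈ S ↔ ∃ h : x < r, p ⟨x, h⟩) :
    ((Finset.univ : Finset (Fin r)).filter p).card = S.card := by
  apply Finset.card_bij (fun (i : Fin r) _ => i.val)
  · intro a ha
    rw [hS]
    refine ⟨a.isLt, ?_⟩
    have := (Finset.mem_filter.1 ha).2
    simpa using this
  · intro a _ b _ h
    exact Fin.val_injective h
  · intro b hb
    obtain ⟨h, hp⟩ := (hS b).1 hb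
    exact ⟨⟨b, h⟩, Finset.mem_filter.2 ⟨Finset.mem_univ _, hp⟩, rfl⟩

private lemma card_filter_split' {α : Type*} (s : Finset α) (p q : α → Prop)
    [DecidablePred p] [DecidablePred q] :
    (s.filter p).card
      = (s.filter fun x => p x ∧ q x).card + (s.filter fun x => p x ∧ ¬ q x).card := by
  classical
  rw [← Finset.filter_filter, ← Finset.filter_filter,
    Finset.card_filter_add_card_filter_not]

/-- degree identity for a "partite + coloring" graph. -/
private lemma deg_identity {r n t : ℕ} (γ : Fin r × Fin n → Fin t)
    (G : SimpleGraph (Fin r × Fin n)) [inst : DecidableRel G.Adj]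
    (hAdj : ∀ u w, G.Adj u w ↔ (u.1 ≠ w.1 ∧ γ u ≠ γ w)) (v : Fin r × Fin n) :
    G.degree v + (n +
      (Finset.univ.filter fun u : Fin r × Fin n => u.1 ≠ v.1 ∧ γ u = γ v).card) = r * n := by
  have h1 : G.degree v = (Finset.univ.filter fun u => G.Adj v u).card := by
    have : G.degree v = (G.neighborFinset v).card := rfl
    rw [this, SimpleGraph.neighborFinset_eq_filter]
  have h2 : (Finset.univ.filter fun u : Fin r × Fin n => G.Adj v u).card
      + (Finset.univ.filter fun u : Fin r × Fin n => ¬ G.Adj v u).card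
      = (Finset.univ : Finset (Fin r × Fin n)).card :=
    Finset.card_filter_add_card_filter_not _
  have h3 : (Finset.univ.filter fun u : Fin r × Fin n => ¬ G.Adj v u)
      = (Finset.univ.filter fun u : Fin r × Fin n => u.1 = v.1)
        ∪ (Finset.univ.filter fun u : Fin r × Fin n => u.1 ≠ v.1 ∧ γ u = γ v) := by
    ext u
    simp only [Finset.mem_filter, Finset.mem_univ, true_and, Finset.mem_union, hAdj]
    constructor
    · intro h
      by_cases h1' : u.1 = v.1
      · exact Or.inl h1'
      · right
        refine ⟨h1', ?_⟩
        by_contra h2'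
        exact h ⟨fun hh => h1' hh.symm, fun hh => h2' hh.symm⟩
    · rintro (h | ⟨ha, hb⟩) hcon
      · exact hcon.1 h.symm
      · exact hcon.2 hb.symm
  have hdisj : Disjoint (Finset.univ.filter fun u : Fin r × Fin n => u.1 = v.1)
      (Finset.univ.filter fun u : Fin r × Fin n => u.1 ≠ v.1 ∧ γ u = γ v) := by
    rw [Finset.disjoint_left]
    intro a ha hb
    simp only [Finset.mem_filter] at ha hb
    exact hb.2.1 ha.2
  have h4 : (Finset.univ.filter fun u : Fin r × Fin n => u.1 = v.1).card = n := by
    have hcc := card_filter_prod'' (fun u : Fin r × Fin n => u.1 = v.1)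
      (fun x : Fin r => x = v.1) (fun _ : Fin n => True) (fun u => by simp)
    rw [hcc]
    have hP : ((Finset.univ : Finset (Fin r)).filter fun x : Fin r => x = v.1).card
        = ({v.1.val} : Finset ℕ).card := by
      apply card_filter_count
      intro x
      simp only [Finset.mem_singleton]
      constructor
      · rintro rfl
        exact ⟨v.1.isLt, by apply Fin.val_injective; simp⟩
      · rintro ⟨h, he⟩
        have : (⟨x, h⟩ : Fin r).val = v.1.val := by rw [he]
        simpa using this
    have hQ : ((Finset.univ : Finset (Fin n)).filter fun _ : Fin n => True).card = n := by
      simp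
    rw [hP, hQ, Finset.card_singleton, one_mul]
  rw [h3, Finset.card_union_of_disjoint hdisj, h4] at h2
  rw [h1]
  have hu : (Finset.univ : Finset (Fin r × Fin n)).card = r * n := by simp
  omega

/-- min-degree formula for such a graph. -/
private lemma minDeg_formula {r n t : ℕ} (γ : Fin r × Fin n → Fin t)
    (G : SimpleGraph (Fin r × Fin n)) [inst : DecidableRel G.Adj]
    (hAdj : ∀ u w, G.Adj u w ↔ (u.1 ≠ w.1 ∧ γ u ≠ γ w))
    (L : ℕ) (v0 : Fin r × Fin n)
    (hle : ∀ v : Fin r × Fin n,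
      (Finset.univ.filter fun u : Fin r × Fin n => u.1 ≠ v.1 ∧ γ u = γ v).card ≤ L)
    (h0 : (Finset.univ.filter fun u : Fin r × Fin n => u.1 ≠ v0.1 ∧ γ u = γ v0).card = L)
    (hrn : (r - 1) * n + n = r * n) :
    G.minDegree = (r - 1) * n - L := by
  haveI : Nonempty (Fin r × Fin n) := ⟨v0⟩
  apply le_antisymm
  · have h := G.minDegree_le_degree v0
    have hd0 := deg_identity γ G hAdj v0
    rw [h0] at hd0
    omega
  · apply SimpleGraph.le_minDegree_of_forall_le_degree
    intro v
    have hd := deg_identity γ G hAdj v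
    have := hle v
    omega

end Aux

/-- Let `r ≥ m, t ≥ 2` with `m(t-1) ≤ r ≤ mt-1`. There is an `r`-partite graph `G` with
parts of size `n` and chromatic number at most `t` such that
`δ(G) = (r-1)n - (m-1)⌈(r-1)n/(mt-2)⌉`; in particular `δ(n,r,t)` is at least this value. -/
theorem stmt10 (n r m t : ℕ) (hn : 1 ≤ n) (hm : 2 ≤ m) (ht : 2 ≤ t)
    (hmr : m ≤ r) (htr : t ≤ r) (h1 : m * (t - 1) ≤ r) (h2 : r ≤ m * t - 1) :
    (∃ G : SimpleGraph (Fin r × Fin n), IsPartite G ∧ G.chromaticNumber ≤ (t : ℕ∞) ∧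
      G.minDegree = (r - 1) * n - (m - 1) * (((r - 1) * n) ⌈/⌉ (m * t - 2))) ∧
    (r - 1) * n - (m - 1) * (((r - 1) * n) ⌈/⌉ (m * t - 2)) ≤ deltaP n r t := by
  have hm0 : 0 < m := by omega
  set A := m * (t - 1) with hA
  set k := m * t - 2 with hk
  set N := (r - 1) * n with hN
  set q := N ⌈/⌉ k with hq
  set L := (m - 1) * q with hL
  have hmt4 : 4 ≤ m * t := by
    calc 4 = 2 * 2 := rfl
    _ ≤ m * t := Nat.mul_le_mul hm ht
  have hk2 : 2 ≤ k := by omega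
  have hkpos : 0 < k := by omega
  have hAk : A + m = k + 2 := by
    have ht1 : t - 1 + 1 = t := by omega
    have : m * (t - 1) + m = m * t := by
      conv_rhs => rw [← ht1]
      ring
    omega
  have hAr : A ≤ r := h1
  have hA2 : 2 ≤ A := by
    have : 2 * 1 ≤ m * (t - 1) := Nat.mul_le_mul hm (by omega)
    omega
  have hrk : r - 1 ≤ k := by omega
  have hqk : N ≤ k * q := by
    have := le_smul_ceilDiv (b := N) hkpos
    simpa [smul_eq_mul] using this
  have hqn : q ≤ n := by
    rw [hq, ceilDiv_le_iff_le_smul hkpos, smul_eq_mul, hN]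
    exact Nat.mul_le_mul hrk le_rfl
  have hNpos : 1 ≤ N := by
    have : 1 * 1 ≤ (r - 1) * n := Nat.mul_le_mul (by omega) hn
    omega
  have hq1 : 1 ≤ q := by
    by_contra h
    have hq0 : q = 0 := by omega
    rw [hq0, Nat.mul_zero] at hqk
    omega
  have hrn : N + n = r * n := by
    have hr1 : r = (r - 1) + 1 := by omega
    calc N + n = (r - 1) * n + n := by rw [hN]
    _ = ((r - 1) + 1) * n := by ring
    _ = r * n := by rw [← hr1]
  -- the coloring
  set γ : Fin r × Fin n → Fin t := fun u =>
    if u.1.val < A ∧ u.2.val < q then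
      ⟨u.1.val / m, by
        rw [Nat.div_lt_iff_lt_mul hm0, Nat.mul_comm]
        have := u.1.isLt
        omega⟩
    else ⟨t - 1, by omega⟩ with hγ
  have hγ_heavy : ∀ u : Fin r × Fin n, (u.1.val < A ∧ u.2.val < q) →
      (γ u).val = u.1.val / m := by
    intro u h
    simp only [hγ, if_pos h]
  have hγ_light : ∀ u : Fin r × Fin n, ¬(u.1.val < A ∧ u.2.val < q) →
      (γ u).val = t - 1 := by
    intro u h
    simp only [hγ, if_neg h]
  have hdiv_lt : ∀ x : ℕ, x < A → x / m < t - 1 := by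
    intro x hx
    rw [Nat.div_lt_iff_lt_mul hm0, Nat.mul_comm]
    exact hx
  -- counting on Fin n
  have cntq : ((Finset.univ : Finset (Fin n)).filter fun j : Fin n => j.val < q).card = q := by
    have hh := card_filter_count (fun j : Fin n => j.val < q) (Finset.range q)
      (fun x => by
        simp only [Finset.mem_range]
        constructor
        · intro hx
          exact ⟨by omega, hx⟩
        · rintro ⟨h, hx⟩
          exact hx)
    rw [hh, Finset.card_range]
  have cntq' : ((Finset.univ : Finset (Fin n)).filter fun j : Fin n => ¬ j.val < q).card
      = n - q := by
    have hh := card_filter_count (fun j : Fin n => ¬ j.val < q) (Finset.Ico q n)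
      (fun x => by
        simp only [Finset.mem_Ico]
        constructor
        · intro hx
          exact ⟨by omega, by omega⟩
        · rintro ⟨h, hx⟩
          constructor
          · omega
          · exact h)
    rw [hh, Nat.card_Ico]
  have cntT : ((Finset.univ : Finset (Fin n)).filter fun _ : Fin n => True).card = n := by
    simp
  -- heavy loss
  have hloss_heavy : ∀ v : Fin r × Fin n, v.1.val < A → v.2.val < q →
      (Finset.univ.filter fun u : Fin r × Fin n => u.1 ≠ v.1 ∧ γ u = γ v).card = L := by
    intro v hvA hvq
    have hdt : v.1.val / m < t - 1 := hdiv_lt _ hvA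
    have hγv : (γ v).val = v.1.val / m := hγ_heavy v ⟨hvA, hvq⟩
    have hiff : ∀ u : Fin r × Fin n,
        (u.1 ≠ v.1 ∧ γ u = γ v) ↔
        ((u.1 ≠ v.1 ∧ u.1.val < A ∧ u.1.val / m = v.1.val / m) ∧ u.2.val < q) := by
      intro u
      constructor
      · rintro ⟨hne, heq⟩
        by_cases hu : u.1.val < A ∧ u.2.val < q
        · have hγu := hγ_heavy u hu
          have hv : u.1.val / m = v.1.val / m := by
            rw [← hγu, ← hγv, heq]
          exact ⟨⟨hne, hu.1, hv⟩, hu.2⟩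
        · exfalso
          have hγu := hγ_light u hu
          have heqv : (γ u).val = (γ v).val := by rw [heq]
          rw [hγu, hγv] at heqv
          omega
      · rintro ⟨⟨hne, huA, hud⟩, huq⟩
        refine ⟨hne, ?_⟩
        apply Fin.val_injective
        rw [hγ_heavy u ⟨huA, huq⟩, hγv, hud]
    have hcnt : ((Finset.univ : Finset (Fin r)).filter
        fun x : Fin r => x ≠ v.1 ∧ x.val < A ∧ x.val / m = v.1.val / m).card = m - 1 := by
      set d := v.1.val / m with hd
      have hup : m * d + m ≤ A := by
        have h' : m * (d + 1) ≤ m * (t - 1) := Nat.mul_le_mul_left m (by omega)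
        calc m * d + m = m * (d + 1) := by ring
        _ ≤ m * (t - 1) := h'
        _ = A := rfl
      have hh := card_filter_count
        (fun x : Fin r => x ≠ v.1 ∧ x.val < A ∧ x.val / m = d)
        ((Finset.Ico (m * d) (m * d + m)).erase v.1.val)
        (fun x => by
          simp only [Finset.mem_erase, Finset.mem_Ico]
          constructor
          · rintro ⟨hne, hlo, hhi⟩
            have hxA : x < A := by omega
            have hxr : x < r := by omega
            have e1 : d * m = m * d := by ring
            have e2 : (d + 1) * m = m * d + m := by ring
            have hxd : x / m = d := Nat.div_eq_of_lt_le (by omega) (by omega)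
            refine ⟨hxr, ?_, hxA, hxd⟩
            intro hcon
            apply hne
            rw [← hcon]
          · rintro ⟨hxr, hne, hxA, hxd⟩
            have h1' := Nat.div_add_mod x m
            have h2' := Nat.mod_lt x hm0
            rw [hxd] at h1'
            refine ⟨?_, by omega, by omega⟩
            intro hcon
            apply hne
            apply Fin.val_injective
            exact hcon)
      rw [hh]
      have hmem : v.1.val ∈ Finset.Ico (m * d) (m * d + m) := by
        have h1' := Nat.div_add_mod v.1.val m
        have h2' := Nat.mod_lt v.1.val hm0
        rw [← hd] at h1'
        simp only [Finset.mem_Ico]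
        omega
      rw [Finset.card_erase_of_mem hmem, Nat.card_Ico]
      omega
    calc (Finset.univ.filter fun u : Fin r × Fin n => u.1 ≠ v.1 ∧ γ u = γ v).card
        = ((Finset.univ : Finset (Fin r)).filter
            (fun x : Fin r => x ≠ v.1 ∧ x.val < A ∧ x.val / m = v.1.val / m)).card *
          ((Finset.univ : Finset (Fin n)).filter (fun j : Fin n => j.val < q)).card :=
          card_filter_prod'' _ _ _ hiff
      _ = (m - 1) * q := by rw [hcnt, cntq]
      _ = L := hL.symm
  -- light loss, heavy part
  have hlight1 : ∀ v : Fin r × Fin n, v.1.val < A → ¬ v.2.val < q →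
      (Finset.univ.filter fun u : Fin r × Fin n => u.1 ≠ v.1 ∧ γ u = γ v).card
        = (A - 1) * (n - q) + (r - A) * n := by
    intro v hvA hvq
    have hγv : (γ v).val = t - 1 := hγ_light v (by tauto)
    have hiffL : ∀ u : Fin r × Fin n,
        (u.1 ≠ v.1 ∧ γ u = γ v) ↔ (u.1 ≠ v.1 ∧ ¬(u.1.val < A ∧ u.2.val < q)) := by
      intro u
      constructor
      · rintro ⟨hne, heq⟩
        refine ⟨hne, ?_⟩
        intro hu
        have hγu := hγ_heavy u hu
        have hdt : u.1.val / m < t - 1 := hdiv_lt _ hu.1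
        have heqv : (γ u).val = (γ v).val := by rw [heq]
        rw [hγu, hγv] at heqv
        omega
      · rintro ⟨hne, hu⟩
        refine ⟨hne, ?_⟩
        apply Fin.val_injective
        rw [hγ_light u hu, hγv]
    have hsplit := card_filter_split' (Finset.univ : Finset (Fin r × Fin n))
      (fun u : Fin r × Fin n => u.1 ≠ v.1 ∧ γ u = γ v)
      (fun u : Fin r × Fin n => u.1.val < A)
    have hc1 : (Finset.univ.filter fun u : Fin r × Fin n =>
        (u.1 ≠ v.1 ∧ γ u = γ v) ∧ u.1.val < A).card = (A - 1) * (n - q) := by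
      have hp := card_filter_prod''
        (fun u : Fin r × Fin n => (u.1 ≠ v.1 ∧ γ u = γ v) ∧ u.1.val < A)
        (fun x : Fin r => x ≠ v.1 ∧ x.val < A)
        (fun j : Fin n => ¬ j.val < q)
        (fun u => by
          constructor
          · rintro ⟨hl, huA⟩
            have := (hiffL u).1 hl
            exact ⟨⟨this.1, huA⟩, fun hq' => this.2 ⟨huA, hq'⟩⟩
          · rintro ⟨⟨hne, huA⟩, hq'⟩
            exact ⟨(hiffL u).2 ⟨hne, fun hc => hq' hc.2⟩, huA⟩)
      rw [hp, cntq']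
      have hcA : ((Finset.univ : Finset (Fin r)).filter
          fun x : Fin r => x ≠ v.1 ∧ x.val < A).card = A - 1 := by
        have hh := card_filter_count (fun x : Fin r => x ≠ v.1 ∧ x.val < A)
          ((Finset.range A).erase v.1.val)
          (fun x => by
            simp only [Finset.mem_erase, Finset.mem_range]
            constructor
            · rintro ⟨hne, hxA⟩
              refine ⟨by omega, ?_, hxA⟩
              intro hcon
              exact hne (by rw [← hcon])
            · rintro ⟨hxr, hne, hxA⟩
              exact ⟨fun hcon => hne (Fin.val_injective hcon), hxA⟩)
        rw [hh, Finset.card_erase_of_mem (by simp only [Finset.mem_range]; omega),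
          Finset.card_range]
      rw [hcA]
    have hc2 : (Finset.univ.filter fun u : Fin r × Fin n =>
        (u.1 ≠ v.1 ∧ γ u = γ v) ∧ ¬ u.1.val < A).card = (r - A) * n := by
      have hp := card_filter_prod''
        (fun u : Fin r × Fin n => (u.1 ≠ v.1 ∧ γ u = γ v) ∧ ¬ u.1.val < A)
        (fun x : Fin r => x ≠ v.1 ∧ ¬ x.val < A)
        (fun _ : Fin n => True)
        (fun u => by
          constructor
          · rintro ⟨hl, huA⟩
            have := (hiffL u).1 hl
            exact ⟨⟨this.1, huA⟩, trivial⟩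
          · rintro ⟨⟨hne, huA⟩, -⟩
            exact ⟨(hiffL u).2 ⟨hne, fun hc => huA hc.1⟩, huA⟩)
      rw [hp, cntT]
      have hcB : ((Finset.univ : Finset (Fin r)).filter
          fun x : Fin r => x ≠ v.1 ∧ ¬ x.val < A).card = r - A := by
        have hh := card_filter_count (fun x : Fin r => x ≠ v.1 ∧ ¬ x.val < A)
          (Finset.Ico A r)
          (fun x => by
            simp only [Finset.mem_Ico]
            constructor
            · rintro ⟨hxA, hxr⟩
              refine ⟨hxr, ?_, by omega⟩
              intro hcon
              have : x = v.1.val := congrArg Fin.val hcon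
              omega
            · rintro ⟨hxr, hne, hxA⟩
              exact ⟨by omega, hxr⟩)
        rw [hh, Nat.card_Ico]
      rw [hcB]
    rw [hsplit, hc1, hc2]
  -- light loss, extra part
  have hlight2 : ∀ v : Fin r × Fin n, ¬ v.1.val < A →
      (Finset.univ.filter fun u : Fin r × Fin n => u.1 ≠ v.1 ∧ γ u = γ v).card
        = A * (n - q) + (r - A - 1) * n := by
    intro v hvA
    have hγv : (γ v).val = t - 1 := hγ_light v (by tauto)
    have hiffL : ∀ u : Fin r × Fin n,
        (u.1 ≠ v.1 ∧ γ u = γ v) ↔ (u.1 ≠ v.1 ∧ ¬(u.1.val < A ∧ u.2.val < q)) := by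
      intro u
      constructor
      · rintro ⟨hne, heq⟩
        refine ⟨hne, ?_⟩
        intro hu
        have hγu := hγ_heavy u hu
        have hdt : u.1.val / m < t - 1 := hdiv_lt _ hu.1
        have heqv : (γ u).val = (γ v).val := by rw [heq]
        rw [hγu, hγv] at heqv
        omega
      · rintro ⟨hne, hu⟩
        refine ⟨hne, ?_⟩
        apply Fin.val_injective
        rw [hγ_light u hu, hγv]
    have hsplit := card_filter_split' (Finset.univ : Finset (Fin r × Fin n))
      (fun u : Fin r × Fin n => u.1 ≠ v.1 ∧ γ u = γ v)
      (fun u : Fin r × Fin n => u.1.val < A)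
    have hc1 : (Finset.univ.filter fun u : Fin r × Fin n =>
        (u.1 ≠ v.1 ∧ γ u = γ v) ∧ u.1.val < A).card = A * (n - q) := by
      have hp := card_filter_prod''
        (fun u : Fin r × Fin n => (u.1 ≠ v.1 ∧ γ u = γ v) ∧ u.1.val < A)
        (fun x : Fin r => x.val < A)
        (fun j : Fin n => ¬ j.val < q)
        (fun u => by
          constructor
          · rintro ⟨hl, huA⟩
            have := (hiffL u).1 hl
            exact ⟨huA, fun hq' => this.2 ⟨huA, hq'⟩⟩
          · rintro ⟨huA, hq'⟩
            refine ⟨(hiffL u).2 ⟨?_, fun hc => hq' hc.2⟩, huA⟩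
            intro hcon
            apply hvA
            rw [← hcon]
            exact huA)
      rw [hp, cntq']
      have hcA : ((Finset.univ : Finset (Fin r)).filter
          fun x : Fin r => x.val < A).card = A := by
        have hh := card_filter_count (fun x : Fin r => x.val < A) (Finset.range A)
          (fun x => by
            simp only [Finset.mem_range]
            constructor
            · intro hx
              exact ⟨by omega, hx⟩
            · rintro ⟨h, hx⟩
              exact hx)
        rw [hh, Finset.card_range]
      rw [hcA]
    have hc2 : (Finset.univ.filter fun u : Fin r × Fin n =>
        (u.1 ≠ v.1 ∧ γ u = γ v) ∧ ¬ u.1.val < A).card = (r - A - 1) * n := by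
      have hp := card_filter_prod''
        (fun u : Fin r × Fin n => (u.1 ≠ v.1 ∧ γ u = γ v) ∧ ¬ u.1.val < A)
        (fun x : Fin r => x ≠ v.1 ∧ ¬ x.val < A)
        (fun _ : Fin n => True)
        (fun u => by
          constructor
          · rintro ⟨hl, huA⟩
            have := (hiffL u).1 hl
            exact ⟨⟨this.1, huA⟩, trivial⟩
          · rintro ⟨⟨hne, huA⟩, -⟩
            exact ⟨(hiffL u).2 ⟨hne, fun hc => huA hc.1⟩, huA⟩)
      rw [hp, cntT]
      have hcB : ((Finset.univ : Finset (Fin r)).filter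
          fun x : Fin r => x ≠ v.1 ∧ ¬ x.val < A).card = r - A - 1 := by
        have hh := card_filter_count (fun x : Fin r => x ≠ v.1 ∧ ¬ x.val < A)
          ((Finset.Ico A r).erase v.1.val)
          (fun x => by
            simp only [Finset.mem_erase, Finset.mem_Ico]
            constructor
            · rintro ⟨hne, hxA, hxr⟩
              refine ⟨hxr, ?_, by omega⟩
              intro hcon
              exact hne (by rw [← hcon])
            · rintro ⟨hxr, hne, hxA⟩
              exact ⟨fun hcon => hne (Fin.val_injective hcon), by omega, hxr⟩)
        rw [hh, Finset.card_erase_of_mem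
          (by simp only [Finset.mem_Ico]; exact ⟨by omega, v.1.isLt⟩), Nat.card_Ico]
      rw [hcB]
    rw [hsplit, hc1, hc2]
  -- the two inequalities
  have hqkZ : (N : ℤ) ≤ (k : ℤ) * q := by exact_mod_cast hqk
  have hAkZ : (A : ℤ) + m = (k : ℤ) + 2 := by exact_mod_cast hAk
  have hNZ : (N : ℤ) = ((r : ℤ) - 1) * n := by
    rw [hN]
    push_cast [Nat.cast_sub (show 1 ≤ r by omega)]
    ring
  have ineq1 : (A - 1) * (n - q) + (r - A) * n ≤ L := by
    rw [hL]
    zify [hqn, hAr, show 1 ≤ A by omega, show 1 ≤ m by omega]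
    have e2 : ((A : ℤ) - 1) * q + ((m : ℤ) - 1) * q = (k : ℤ) * q := by
      linear_combination (q : ℤ) * hAkZ
    linarith [hqkZ, hNZ, e2]
  have ineq2 : ∀ hAr' : A + 1 ≤ r, A * (n - q) + (r - A - 1) * n ≤ L := by
    intro hAr'
    rw [hL]
    zify [hqn, show A + 1 ≤ r from hAr', show A ≤ r by omega, show 1 ≤ r - A by omega,
      show 1 ≤ m by omega]
    have e2 : ((A : ℤ)) * q + ((m : ℤ) - 1) * q = ((k : ℤ) + 1) * q := by
      linear_combination (q : ℤ) * hAkZ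
    have hq0 : (0 : ℤ) ≤ (q : ℤ) := by positivity
    linarith [hqkZ, hNZ, e2, hq0]
  -- all losses bounded
  have hloss_le : ∀ v : Fin r × Fin n,
      (Finset.univ.filter fun u : Fin r × Fin n => u.1 ≠ v.1 ∧ γ u = γ v).card ≤ L := by
    intro v
    by_cases hvA : v.1.val < A
    · by_cases hvq : v.2.val < q
      · rw [hloss_heavy v hvA hvq]
      · rw [hlight1 v hvA hvq]
        exact ineq1
    · rw [hlight2 v hvA]
      exact ineq2 (by have := v.1.isLt; omega)
  -- base vertex
  have hr0 : 0 < r := by omega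
  have hn0 : 0 < n := by omega
  set v0 : Fin r × Fin n := (⟨0, hr0⟩, ⟨0, hn0⟩) with hv0
  have hv0A : v0.1.val < A := by
    simp only [hv0]
    omega
  have hv0q : v0.2.val < q := by
    simp only [hv0]
    omega
  have hloss0 := hloss_heavy v0 hv0A hv0q
  -- the graph
  let G : SimpleGraph (Fin r × Fin n) :=
    { Adj := fun u w => u.1 ≠ w.1 ∧ γ u ≠ γ w
      symm := ⟨fun u w h => ⟨Ne.symm h.1, Ne.symm h.2⟩⟩
      loopless := ⟨fun u h => h.1 rfl⟩ }
  have hAdj : ∀ u w, G.Adj u w ↔ (u.1 ≠ w.1 ∧ γ u ≠ γ w) := fun _ _ => Iff.rfl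
  have hEx : ∃ G' : SimpleGraph (Fin r × Fin n), IsPartite G' ∧
      G'.chromaticNumber ≤ (t : ℕ∞) ∧ G'.minDegree = N - L := by
    refine ⟨G, fun v w h => h.1, ?_, ?_⟩
    · have C : G.Coloring (Fin t) := SimpleGraph.Coloring.mk γ (fun h => h.2)
      have hcol : G.Colorable t := ⟨C⟩
      exact hcol.chromaticNumber_le
    · exact minDeg_formula (inst := fun a b => Classical.propDecidable _) γ G hAdj L v0
        hloss_le hloss0 hrn
  constructor
  · exact hEx
  · apply le_csSup
    · refine ⟨r * n, ?_⟩
      rintro d ⟨G', -, -, rfl⟩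
      have hne : Nonempty (Fin r × Fin n) := ⟨v0⟩
      calc G'.minDegree ≤ G'.degree (Classical.arbitrary _) :=
            SimpleGraph.minDegree_le_degree _ _
        _ ≤ Fintype.card (Fin r × Fin n) :=
            le_of_lt (SimpleGraph.degree_lt_card_verts _)
        _ = r * n := by simp
    · exact hEx
end

section
/- Let $r > t \ge 3$ with $r = mt - a$ where $2 \le m < a < t$. Then $\delta(n,r,t) \ge (r-1)n - (m-1)\lceil \frac{(m(t-1-a+m)-1)n}{m(t-a+m)-2} \rceil$. -/
open scoped Classical

/-- The graph obtained from a colouring `φ`: join vertices in different parts with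
different colours. -/
def colGraph (r n : ℕ) (φ : Fin r × Fin n → ℕ) : SimpleGraph (Fin r × Fin n) where
  Adj v w := v.1 ≠ w.1 ∧ φ v ≠ φ w
  symm := ⟨fun v w h => ⟨h.1.symm, h.2.symm⟩⟩
  loopless := ⟨fun v h => h.1 rfl⟩

lemma colGraph_adj (r n : ℕ) (φ : Fin r × Fin n → ℕ) (v w : Fin r × Fin n) :
    (colGraph r n φ).Adj v w ↔ v.1 ≠ w.1 ∧ φ v ≠ φ w := Iff.rfl

lemma colGraph_isPartite (r n : ℕ) (φ : Fin r × Fin n → ℕ) :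
    IsPartite (colGraph r n φ) := fun _ _ h => h.1

/-- Key degree bound for `colGraph`. -/
lemma colGraph_degree (r n B : ℕ) (φ : Fin r × Fin n → ℕ) (v : Fin r × Fin n)
    (hQ : (Finset.univ.filter
      (fun w : Fin r × Fin n => ¬ w.1 = v.1 ∧ φ v = φ w)).card ≤ B) :
    (r - 1) * n - B ≤ (colGraph r n φ).degree v := by
  classical
  have hdeg : (colGraph r n φ).degree v
      = (Finset.univ.filter (fun w : Fin r × Fin n => ¬ w.1 = v.1 ∧ ¬ φ v = φ w)).card := by
    rw [SimpleGraph.degree, SimpleGraph.neighborFinset_eq_filter]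
    congr 1
    ext w
    simp only [Finset.mem_filter, colGraph_adj, ne_eq, Finset.mem_univ, true_and]
    constructor
    · rintro ⟨h1, h2⟩; exact ⟨fun h => h1 h.symm, h2⟩
    · rintro ⟨h1, h2⟩; exact ⟨fun h => h1 h.symm, h2⟩
  -- the part-count
  have hpart : (Finset.univ.filter (fun w : Fin r × Fin n => w.1 = v.1)).card = n := by
    have heq : (Finset.univ.filter (fun w : Fin r × Fin n => w.1 = v.1))
        = Finset.image (fun y : Fin n => (v.1, y)) Finset.univ := by
      ext w
      simp only [Finset.mem_filter, Finset.mem_univ, true_and, Finset.mem_image]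
      constructor
      · intro h; exact ⟨w.2, Prod.ext h.symm rfl⟩
      · rintro ⟨a, rfl⟩; rfl
    rw [heq, Finset.card_image_of_injective _ (fun a b h => congrArg Prod.snd h)]
    simp
  have hU : (Finset.univ : Finset (Fin r × Fin n)).card = r * n := by
    simp [Fintype.card_prod]
  have hsplit1 := Finset.card_filter_add_card_filter_not
    (s := (Finset.univ : Finset (Fin r × Fin n))) (p := fun w => w.1 = v.1)
  set s := Finset.univ.filter (fun w : Fin r × Fin n => ¬ w.1 = v.1) with hs
  have hscard : s.card = r * n - n := by omega
  have hsplit2 := Finset.card_filter_add_card_filter_not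
    (s := s) (p := fun w : Fin r × Fin n => φ v = φ w)
  rw [Finset.filter_filter, Finset.filter_filter] at hsplit2
  have hrc : 1 * n ≤ r * n := by
    rcases Nat.eq_zero_or_pos r with h | h
    · subst h; have : (v.1 : ℕ) < 0 := v.1.isLt; omega
    · exact Nat.mul_le_mul_right n h
  rw [hdeg]
  have h1n : (r - 1) * n = r * n - 1 * n := Nat.sub_mul r 1 n
  omega

lemma card_filter_fin_lt_le (n q : ℕ) :
    (Finset.univ.filter (fun y : Fin n => (y : ℕ) < q)).card ≤ q := by
  classical
  have := Finset.card_le_card_of_injOn (fun y : Fin n => (y : ℕ))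
    (s := Finset.univ.filter (fun y : Fin n => (y : ℕ) < q)) (t := Finset.range q)
    (fun y hy => by simpa using (Finset.mem_filter.1 hy).2)
    (fun a _ b _ h => Fin.val_injective h)
  simpa using this

lemma card_filter_fin_ge_le (n q : ℕ) :
    (Finset.univ.filter (fun y : Fin n => ¬ (y : ℕ) < q)).card ≤ n - q := by
  classical
  have := Finset.card_le_card_of_injOn (fun y : Fin n => (y : ℕ) - q)
    (s := Finset.univ.filter (fun y : Fin n => ¬ (y : ℕ) < q)) (t := Finset.range (n - q))
    (fun y hy => by
      have h1 := (Finset.mem_filter.1 hy).2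
      have h2 := y.isLt
      simp only [Finset.coe_range, Set.mem_Iio, Finset.mem_range]
      omega)
    (fun a ha b hb h => by
      have h1 := (Finset.mem_filter.1 ha).2
      have h2 := (Finset.mem_filter.1 hb).2
      have : (a : ℕ) = (b : ℕ) := by simp only at h; omega
      exact Fin.val_injective this)
  simpa using this

set_option maxHeartbeats 1000000 in
/-- Let `r > t ≥ 3` with `r = mt - a` where `2 ≤ m < a < t`. Then
`δ(n,r,t) ≥ (r-1)n - (m-1)⌈(m(t-1-a+m)-1)n / (m(t-a+m)-2)⌉`. -/
theorem stmt11 (n r m t a : ℕ) (hn : 1 ≤ n) (ht : 3 ≤ t) (htr : t < r)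
    (hm : 2 ≤ m) (hma : m < a) (hat : a < t) (hr : r = m * t - a) :
    (r - 1) * n - (m - 1) * (((m * (t - 1 - a + m) - 1) * n) ⌈/⌉ (m * (t - a + m) - 2))
      ≤ deltaP n r t := by
  classical
  set u : ℕ := t - a + m with hu_def
  have hu : m + 1 ≤ u := by omega
  have hut : u ≤ t := by omega
  have huat : u + (a - m) = t := by omega
  set M : ℕ := m * (u - 1) with hM_def
  set c : ℕ := M - 1 with hc_def
  set d : ℕ := m * u - 2 with hd_def
  -- product facts
  have hp1 : m * a + m ≤ m * t := by
    calc m * a + m = m * (a + 1) := by ring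
      _ ≤ m * t := Nat.mul_le_mul_left m (by omega)
  have hp2 : m * m + m ≤ m * a := by
    calc m * m + m = m * (m + 1) := by ring
      _ ≤ m * a := Nat.mul_le_mul_left m (by omega)
  have hp3 : 2 * m ≤ m * m := Nat.mul_le_mul_right m hm
  have hA : m * u = m * t - m * a + m * m := by
    rw [hu_def, Nat.mul_add, Nat.mul_sub]
  have hMA : M + m = m * u := by
    rw [hM_def]
    have h1 : m * (u - 1) + m * 1 = m * u := by
      rw [← Nat.mul_add]; congr 1; omega
    omega
  have hFa : m * (a - m) = m * a - m * m := Nat.mul_sub m a m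
  have hFb : (m - 1) * (a - m) + (a - m) = m * (a - m) := by
    have h2 : m - 1 + 1 = m := by omega
    calc (m - 1) * (a - m) + (a - m) = (m - 1 + 1) * (a - m) := by ring
      _ = m * (a - m) := by rw [h2]
  have hrM : M + (m - 1) * (a - m) = r := by omega
  have hMr : M ≤ r := by omega
  have hdpos : 0 < d := by omega
  have hcd : c + (m - 1) = d := by omega
  have hM2 : 2 ≤ M := by omega
  -- the ceiling value
  have hq_r : m * (t - 1 - a + m) - 1 = c := by
    have h1 : t - 1 - a + m = u - 1 := by omega
    rw [h1, hc_def, hM_def]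
  rw [hq_r]
  set q : ℕ := (c * n) ⌈/⌉ d with hq_def
  -- arithmetic facts about q
  have hqn : q ≤ n := by
    rw [hq_def, ceilDiv_le_iff_le_mul hdpos]
    exact Nat.mul_le_mul_right n (by omega)
  have hdq : c * n ≤ d * q := by
    have := le_smul_ceilDiv (b := c * n) hdpos
    rwa [smul_eq_mul, ← hq_def] at this
  have hL2 : c * (n - q) ≤ (m - 1) * q := by
    have h1 : c * (n - q) + c * q = c * n := by
      rw [← Nat.mul_add]; congr 1; omega
    have h2 : (c + (m - 1)) * q = c * q + (m - 1) * q := Nat.add_mul _ _ _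
    have h3 : d * q = c * q + (m - 1) * q := by rw [← hcd]; exact h2
    omega
  have hL3 : (m - 2) * n ≤ (m - 1) * q := by
    have key : (m - 2) * d ≤ (m - 1) * c := by
      have h1 : m * m + m ≤ m * u := by omega
      have hcz : (c : ℤ) = (m : ℤ) * u - m - 1 := by
        have h3 : c + 1 + m = m * u := by omega
        zify at h3
        linarith
      have hdz : (d : ℤ) = (m : ℤ) * u - 2 := by
        have h4 : d + 2 = m * u := by omega
        zify at h4
        linarith
      have h1' : (m : ℤ) * m + m ≤ (m : ℤ) * u := by zify at h1; linarith
      have hm' : (2 : ℤ) ≤ (m : ℤ) := by exact_mod_cast hm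
      zify [hm, show 1 ≤ m by omega]
      rw [hcz, hdz]
      nlinarith [h1', hm']
    have h3 : d * ((m - 2) * n) ≤ d * ((m - 1) * q) := by
      calc d * ((m - 2) * n) = ((m - 2) * d) * n := by ring
        _ ≤ ((m - 1) * c) * n := Nat.mul_le_mul_right n key
        _ = (m - 1) * (c * n) := by ring
        _ ≤ (m - 1) * (d * q) := Nat.mul_le_mul_left _ hdq
        _ = d * ((m - 1) * q) := by ring
    exact Nat.le_of_mul_le_mul_left h3 hdpos
  -- the colouring
  have hm0 : 0 < m := by omega
  have hm1 : 0 < m - 1 := by omega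
  set φ : Fin r × Fin n → ℕ := fun w =>
    if (w.1 : ℕ) < M then (if (w.2 : ℕ) < q then (w.1 : ℕ) / m else u - 1)
    else u + ((w.1 : ℕ) - M) / (m - 1) with hφ_def
  set G : SimpleGraph (Fin r × Fin n) := colGraph r n φ with hG_def
  haveI : Nonempty (Fin r × Fin n) := ⟨⟨⟨0, by omega⟩, ⟨0, by omega⟩⟩⟩
  -- chromatic number
  have hcol : G.chromaticNumber ≤ (t : ℕ∞) := by
    rw [SimpleGraph.chromaticNumber_le_iff_colorable,
      SimpleGraph.colorable_iff_exists_bdd_nat_coloring]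
    refine ⟨SimpleGraph.Coloring.mk φ (fun {v w} h => h.2), fun w => ?_⟩
    show φ w < t
    rw [hφ_def]
    by_cases h1 : (w.1 : ℕ) < M
    · by_cases h2 : (w.2 : ℕ) < q
      · simp only [h1, h2, if_true]
        have hlt : (w.1 : ℕ) / m < u - 1 := by
          rw [Nat.div_lt_iff_lt_mul hm0]
          have : (u - 1) * m = M := by rw [hM_def]; ring
          omega
        exact lt_of_lt_of_le hlt (by omega)
      · simp only [h1, h2, if_true, if_false]
        omega
    · simp only [h1, if_false]
      have hwr : (w.1 : ℕ) < r := w.1.isLt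
      have hlt : ((w.1 : ℕ) - M) / (m - 1) < a - m := by
        rw [Nat.div_lt_iff_lt_mul hm1]
        have : (a - m) * (m - 1) = (m - 1) * (a - m) := by ring
        omega
      exact lt_of_lt_of_le (Nat.add_lt_add_left hlt u) (le_of_eq huat)
  -- degree bound
  have hdeg : ∀ v, (r - 1) * n - (m - 1) * q ≤ G.degree v := by
    intro v
    apply colGraph_degree
    by_cases h1 : (v.1 : ℕ) < M
    · by_cases h2 : (v.2 : ℕ) < q
      · -- A-colour
        have hφv : φ v = (v.1 : ℕ) / m := by rw [hφ_def]; simp [h1, h2]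
        have hvlt : (v.1 : ℕ) / m < u - 1 := by
          rw [Nat.div_lt_iff_lt_mul hm0]
          have : (u - 1) * m = M := by rw [hM_def]; ring
          omega
        have hsub : Finset.univ.filter
            (fun w : Fin r × Fin n => ¬ w.1 = v.1 ∧ φ v = φ w)
            ⊆ (Finset.univ.filter (fun j : Fin r => (j : ℕ) / m = (v.1 : ℕ) / m ∧ ¬ j = v.1))
              ×ˢ (Finset.univ.filter (fun y : Fin n => (y : ℕ) < q)) := by
          intro w hw
          obtain ⟨-, hne, hcol'⟩ := Finset.mem_filter.1 hw
          rw [hφv, hφ_def] at hcol'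
          simp only at hcol'
          by_cases hw1 : (w.1 : ℕ) < M
          · by_cases hw2 : (w.2 : ℕ) < q
            · rw [if_pos hw1, if_pos hw2] at hcol'
              rw [Finset.mem_product]
              exact ⟨Finset.mem_filter.2 ⟨Finset.mem_univ _, hcol'.symm, fun h => hne (by rw [h])⟩,
                Finset.mem_filter.2 ⟨Finset.mem_univ _, hw2⟩⟩
            · rw [if_pos hw1, if_neg hw2] at hcol'
              exact absurd hcol' (Nat.ne_of_lt hvlt)
          · rw [if_neg hw1] at hcol'
            have h5 : u ≤ (v.1 : ℕ) / m := by rw [hcol']; exact Nat.le_add_right _ _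
            exact absurd h5 (Nat.not_le.2 (lt_of_lt_of_le hvlt (Nat.sub_le u 1)))
        have hT1 : (Finset.univ.filter
            (fun j : Fin r => (j : ℕ) / m = (v.1 : ℕ) / m ∧ ¬ j = v.1)).card ≤ m - 1 := by
          have := Finset.card_le_card_of_injOn (fun j : Fin r => (j : ℕ) % m)
            (s := Finset.univ.filter
              (fun j : Fin r => (j : ℕ) / m = (v.1 : ℕ) / m ∧ ¬ j = v.1))
            (t := (Finset.range m).erase ((v.1 : ℕ) % m))
            (fun j hj => by
              obtain ⟨-, hdiv, hne⟩ := Finset.mem_filter.1 hj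
              refine Finset.mem_erase.2 ⟨?_, Finset.mem_range.2 (Nat.mod_lt _ hm0)⟩
              intro hmod
              apply hne
              apply Fin.val_injective
              show (j : ℕ) = (v.1 : ℕ)
              simp only at hmod
              conv_lhs => rw [← Nat.div_add_mod (j : ℕ) m]
              conv_rhs => rw [← Nat.div_add_mod (v.1 : ℕ) m]
              rw [hdiv, hmod])
            (fun j hj k hk hjk => by
              obtain ⟨-, hdivj, -⟩ := Finset.mem_filter.1 (by exact hj)
              obtain ⟨-, hdivk, -⟩ := Finset.mem_filter.1 (by exact hk)
              apply Fin.val_injective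
              show (j : ℕ) = (k : ℕ)
              simp only at hjk
              conv_lhs => rw [← Nat.div_add_mod (j : ℕ) m]
              conv_rhs => rw [← Nat.div_add_mod (k : ℕ) m]
              rw [hdivj, hdivk, hjk])
          rw [Finset.card_erase_of_mem (Finset.mem_range.2 (Nat.mod_lt _ hm0)),
            Finset.card_range] at this
          exact this
        calc (Finset.univ.filter
            (fun w : Fin r × Fin n => ¬ w.1 = v.1 ∧ φ v = φ w)).card
            ≤ _ := Finset.card_le_card hsub
          _ = _ := Finset.card_product _ _
          _ ≤ (m - 1) * q := Nat.mul_le_mul hT1 (card_filter_fin_lt_le n q)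
      · -- S-colour
        have hφv : φ v = u - 1 := by rw [hφ_def]; simp [h1, h2]
        have hsub : Finset.univ.filter
            (fun w : Fin r × Fin n => ¬ w.1 = v.1 ∧ φ v = φ w)
            ⊆ (Finset.univ.filter (fun j : Fin r => (j : ℕ) < M ∧ ¬ j = v.1))
              ×ˢ (Finset.univ.filter (fun y : Fin n => ¬ (y : ℕ) < q)) := by
          intro w hw
          obtain ⟨-, hne, hcol'⟩ := Finset.mem_filter.1 hw
          rw [hφv, hφ_def] at hcol'
          simp only at hcol'
          by_cases hw1 : (w.1 : ℕ) < M
          · by_cases hw2 : (w.2 : ℕ) < q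
            · rw [if_pos hw1, if_pos hw2] at hcol'
              have hlt : (w.1 : ℕ) / m < u - 1 := by
                rw [Nat.div_lt_iff_lt_mul hm0]
                have : (u - 1) * m = M := by rw [hM_def]; ring
                omega
              exact absurd hcol'.symm (Nat.ne_of_lt hlt)
            · rw [Finset.mem_product]
              exact ⟨Finset.mem_filter.2 ⟨Finset.mem_univ _, hw1, fun h => hne (by rw [h])⟩,
                Finset.mem_filter.2 ⟨Finset.mem_univ _, hw2⟩⟩
          · rw [if_neg hw1] at hcol'
            have h5 : u ≤ u - 1 := by rw [hcol']; exact Nat.le_add_right _ _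
            omega
        have hT1 : (Finset.univ.filter
            (fun j : Fin r => (j : ℕ) < M ∧ ¬ j = v.1)).card ≤ M - 1 := by
          have := Finset.card_le_card_of_injOn (fun j : Fin r => (j : ℕ))
            (s := Finset.univ.filter (fun j : Fin r => (j : ℕ) < M ∧ ¬ j = v.1))
            (t := (Finset.range M).erase ((v.1 : ℕ)))
            (fun j hj => by
              obtain ⟨-, hlt, hne⟩ := Finset.mem_filter.1 hj
              exact Finset.mem_erase.2 ⟨fun h => hne (Fin.val_injective h),
                Finset.mem_range.2 hlt⟩)
            (fun j _ k _ hjk => Fin.val_injective hjk)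
          rw [Finset.card_erase_of_mem (Finset.mem_range.2 h1), Finset.card_range] at this
          exact this
        calc (Finset.univ.filter
            (fun w : Fin r × Fin n => ¬ w.1 = v.1 ∧ φ v = φ w)).card
            ≤ _ := Finset.card_le_card hsub
          _ = _ := Finset.card_product _ _
          _ ≤ (M - 1) * (n - q) := Nat.mul_le_mul hT1 (card_filter_fin_ge_le n q)
          _ = c * (n - q) := by rw [hc_def]
          _ ≤ (m - 1) * q := hL2
    · -- F-colour
      have hφv : φ v = u + ((v.1 : ℕ) - M) / (m - 1) := by rw [hφ_def]; simp [h1]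
      have hsub : Finset.univ.filter
          (fun w : Fin r × Fin n => ¬ w.1 = v.1 ∧ φ v = φ w)
          ⊆ (Finset.univ.filter (fun j : Fin r => ¬ (j : ℕ) < M ∧
              ((j : ℕ) - M) / (m - 1) = ((v.1 : ℕ) - M) / (m - 1) ∧ ¬ j = v.1))
            ×ˢ (Finset.univ : Finset (Fin n)) := by
        intro w hw
        obtain ⟨-, hne, hcol'⟩ := Finset.mem_filter.1 hw
        rw [hφv, hφ_def] at hcol'
        simp only at hcol'
        by_cases hw1 : (w.1 : ℕ) < M
        · by_cases hw2 : (w.2 : ℕ) < q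
          · rw [if_pos hw1, if_pos hw2] at hcol'
            have hlt : (w.1 : ℕ) / m < u - 1 := by
              rw [Nat.div_lt_iff_lt_mul hm0]
              have : (u - 1) * m = M := by rw [hM_def]; ring
              omega
            have h5 : u ≤ (w.1 : ℕ) / m := by rw [← hcol']; exact Nat.le_add_right _ _
            exact absurd h5 (Nat.not_le.2 (lt_of_lt_of_le hlt (Nat.sub_le u 1)))
          · rw [if_pos hw1, if_neg hw2] at hcol'
            have h5 : u ≤ u - 1 := by rw [← hcol']; exact Nat.le_add_right _ _
            omega
        · rw [if_neg hw1] at hcol'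
          have hdd : ((v.1 : ℕ) - M) / (m - 1) = ((w.1 : ℕ) - M) / (m - 1) :=
            Nat.add_left_cancel hcol'
          rw [Finset.mem_product]
          exact ⟨Finset.mem_filter.2 ⟨Finset.mem_univ _, hw1, hdd.symm,
            fun h => hne (by rw [h])⟩, Finset.mem_univ _⟩
      have hT1 : (Finset.univ.filter (fun j : Fin r => ¬ (j : ℕ) < M ∧
          ((j : ℕ) - M) / (m - 1) = ((v.1 : ℕ) - M) / (m - 1) ∧ ¬ j = v.1)).card
          ≤ m - 2 := by
        have := Finset.card_le_card_of_injOn (fun j : Fin r => ((j : ℕ) - M) % (m - 1))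
          (s := Finset.univ.filter (fun j : Fin r => ¬ (j : ℕ) < M ∧
            ((j : ℕ) - M) / (m - 1) = ((v.1 : ℕ) - M) / (m - 1) ∧ ¬ j = v.1))
          (t := (Finset.range (m - 1)).erase (((v.1 : ℕ) - M) % (m - 1)))
          (fun j hj => by
            obtain ⟨-, hge, hdiv, hne⟩ := Finset.mem_filter.1 hj
            refine Finset.mem_erase.2 ⟨?_, Finset.mem_range.2 (Nat.mod_lt _ hm1)⟩
            intro hmod
            apply hne
            apply Fin.val_injective
            show (j : ℕ) = (v.1 : ℕ)
            simp only at hmod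
            have hJ : (j : ℕ) - M = (v.1 : ℕ) - M := by
              conv_lhs => rw [← Nat.div_add_mod ((j : ℕ) - M) (m - 1)]
              conv_rhs => rw [← Nat.div_add_mod ((v.1 : ℕ) - M) (m - 1)]
              rw [hdiv, hmod]
            omega)
          (fun j hj k hk hjk => by
            obtain ⟨-, hgej, hdivj, -⟩ := Finset.mem_filter.1 (by exact hj)
            obtain ⟨-, hgek, hdivk, -⟩ := Finset.mem_filter.1 (by exact hk)
            apply Fin.val_injective
            show (j : ℕ) = (k : ℕ)
            simp only at hjk
            have hJ : (j : ℕ) - M = (k : ℕ) - M := by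
              conv_lhs => rw [← Nat.div_add_mod ((j : ℕ) - M) (m - 1)]
              conv_rhs => rw [← Nat.div_add_mod ((k : ℕ) - M) (m - 1)]
              rw [hdivj, hdivk, hjk]
            omega)
        rw [Finset.card_erase_of_mem (Finset.mem_range.2 (Nat.mod_lt _ hm1)),
          Finset.card_range] at this
        omega
      calc (Finset.univ.filter
          (fun w : Fin r × Fin n => ¬ w.1 = v.1 ∧ φ v = φ w)).card
          ≤ _ := Finset.card_le_card hsub
        _ = _ := Finset.card_product _ _
        _ ≤ (m - 2) * n := by
            apply Nat.mul_le_mul hT1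
            simp
        _ ≤ (m - 1) * q := hL3
  have hmin : (r - 1) * n - (m - 1) * q ≤ G.minDegree :=
    SimpleGraph.le_minDegree_of_forall_le_degree G _ hdeg
  have hmem : G.minDegree ∈ {d | ∃ G' : SimpleGraph (Fin r × Fin n),
      IsPartite G' ∧ G'.chromaticNumber ≤ (t : ℕ∞) ∧ G'.minDegree = d} :=
    ⟨G, colGraph_isPartite r n φ, hcol, rfl⟩
  have hbdd : BddAbove {d | ∃ G' : SimpleGraph (Fin r × Fin n),
      IsPartite G' ∧ G'.chromaticNumber ≤ (t : ℕ∞) ∧ G'.minDegree = d} := by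
    refine ⟨r * n, ?_⟩
    rintro x ⟨G', -, -, rfl⟩
    have v := Classical.arbitrary (Fin r × Fin n)
    calc G'.minDegree ≤ G'.degree v := G'.minDegree_le_degree v
      _ ≤ Fintype.card (Fin r × Fin n) := le_of_lt (G'.degree_lt_card_verts v)
      _ = r * n := by simp [Fintype.card_prod]
  exact le_trans hmin (le_csSup hbdd hmem)
end

section
/- Let $m, t \ge 2$ and $r = mt - a$ with $2 \le a \le \min\{m, t-1\}$. If $\frac{r}{t(3t-1)(m-1)} - \frac{a}{t(m-1)} + \frac{a-1}{tm-2} \ge \frac{1}{n}$, then $f(n,r,t+1) = \delta(n,r,t)$. -/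
open scoped Classical

open Finset

def pcol (m t x : ℕ) {r n : ℕ} (v : Fin r × Fin n) : ℕ :=
  if (v.1 : ℕ) < m * (t - 1) ∧ x ≤ (v.2 : ℕ) then (v.1 : ℕ) / m else t - 1

def PG (m t x : ℕ) (r n : ℕ) : SimpleGraph (Fin r × Fin n) where
  Adj v w := v.1 ≠ w.1 ∧ pcol m t x v ≠ pcol m t x w
  symm := ⟨fun v w h => ⟨h.1.symm, h.2.symm⟩⟩
  loopless := ⟨fun v h => h.1 rfl⟩

lemma pcol_lt (m t x : ℕ) {r n : ℕ} (hm : 0 < m) (ht : 0 < t) (v : Fin r × Fin n) :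
    pcol m t x v < t := by
  unfold pcol
  split_ifs with h
  · have h1 : (v.1 : ℕ) / m < t - 1 := Nat.div_lt_of_lt_mul (mul_comm m (t-1) ▸ h.1)
    omega
  · omega

lemma PG_colorable (m t x r n : ℕ) (hm : 0 < m) (ht : 0 < t) :
    (PG m t x r n).Colorable t := by
  refine ⟨SimpleGraph.Coloring.mk (fun v => ⟨pcol m t x v, pcol_lt m t x hm ht v⟩) ?_⟩
  intro v w hvw h
  exact hvw.2 (congrArg Fin.val h)

lemma card_filter_lt (r K : ℕ) :
    ((univ : Finset (Fin r)).filter fun j : Fin r => (j : ℕ) < K).card ≤ K := by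
  have key : ((univ : Finset (Fin r)).filter fun j : Fin r => (j : ℕ) < K).card ≤ (Finset.range K).card :=
    Finset.card_le_card_of_injOn (fun j : Fin r => (j : ℕ)) ?_ ?_
  · simpa using key
  · intro a ha
    simp only [Finset.mem_coe, Finset.mem_filter, Finset.mem_univ, true_and] at ha
    simpa using ha
  · intro a _ b _ h
    exact Fin.val_injective h

lemma card_filter_ge (r K : ℕ) :
    ((univ : Finset (Fin r)).filter fun j : Fin r => K ≤ (j : ℕ)).card ≤ r - K := by
  have key : ((univ : Finset (Fin r)).filter fun j : Fin r => K ≤ (j : ℕ)).card ≤ (Finset.range (r - K)).card :=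
    Finset.card_le_card_of_injOn (fun j : Fin r => (j : ℕ) - K) ?_ ?_
  · simpa using key
  · intro a ha
    simp only [Finset.mem_coe, Finset.mem_filter, Finset.mem_univ, true_and] at ha
    have := a.isLt
    simp only [Finset.mem_coe, Finset.mem_range]
    omega
  · intro a ha b hb h
    simp only [Finset.mem_coe, Finset.mem_filter, Finset.mem_univ, true_and] at ha hb
    have h' : (a : ℕ) - K = (b : ℕ) - K := h
    exact Fin.val_injective (by omega)

lemma card_filter_block (r m q : ℕ) (hm : 0 < m) :
    ((univ : Finset (Fin r)).filter fun j : Fin r => (j : ℕ) / m = q).card ≤ m := by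
  have key : ((univ : Finset (Fin r)).filter fun j : Fin r => (j : ℕ) / m = q).card ≤ (Finset.range m).card :=
    Finset.card_le_card_of_injOn (fun j : Fin r => (j : ℕ) % m) ?_ ?_
  · simpa using key
  · intro a _
    simp only [Finset.mem_coe, Finset.mem_range]
    exact Nat.mod_lt _ hm
  · intro a ha b hb h
    simp only [Finset.mem_coe, Finset.mem_filter, Finset.mem_univ, true_and] at ha hb
    have h' : (a : ℕ) % m = (b : ℕ) % m := by simpa using h
    have hq : (a : ℕ) / m = (b : ℕ) / m := ha.trans hb.symm
    exact Fin.val_injective (by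
      rw [← Nat.div_add_mod (a : ℕ) m, h', hq, Nat.div_add_mod])

lemma card_filter_ub (n x : ℕ) :
    ((univ : Finset (Fin n)).filter fun u : Fin n => x ≤ (u : ℕ)).card ≤ n - x := by
  have key : ((univ : Finset (Fin n)).filter fun u : Fin n => x ≤ (u : ℕ)).card ≤ (Finset.range (n - x)).card :=
    Finset.card_le_card_of_injOn (fun u : Fin n => (u : ℕ) - x) ?_ ?_
  · simpa using key
  · intro a ha
    simp only [Finset.mem_coe, Finset.mem_filter, Finset.mem_univ, true_and] at ha
    have := a.isLt
    simp only [Finset.mem_coe, Finset.mem_range]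
    omega
  · intro a ha b hb h
    simp only [Finset.mem_coe, Finset.mem_filter, Finset.mem_univ, true_and] at ha hb
    have h' : (a : ℕ) - x = (b : ℕ) - x := h
    exact Fin.val_injective (by omega)

lemma arith1 (m t a n x F E U : ℕ) (hm : 2 ≤ m) (ht3 : 3 ≤ t) (ha1 : 2 ≤ a) (ham : a ≤ m)
    (hxn : x ≤ n) (hx1 : (t * m - 2) * x ≤ (a - 1) * n)
    (hF : F ≤ m - a) (hE : E + 1 ≤ m * (t - 1)) (hU : U ≤ x) :
    F * n + E * U ≤ (m - 1) * (n - x) := by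
  have h2tm : 2 ≤ t * m := le_trans (by norm_num) (Nat.mul_le_mul ht3 hm)
  zify [ham, hxn, show (1:ℕ) ≤ m by omega, show (1:ℕ) ≤ a by omega,
    show (1:ℕ) ≤ t by omega, h2tm] at hx1 hF hE hU ⊢
  have p1 : (F : ℤ) * n ≤ ((m : ℤ) - a) * n :=
    mul_le_mul_of_nonneg_right hF (by positivity)
  have p2 : (E : ℤ) * U ≤ ((m : ℤ) * ((t:ℤ) - 1) - 1) * x := by
    refine mul_le_mul (by push_cast at hE ⊢; linarith) hU (by positivity) ?_
    have h4 : (2 : ℤ) ≤ (m : ℤ) := by exact_mod_cast hm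
    have h5 : (3 : ℤ) ≤ (t : ℤ) := by exact_mod_cast ht3
    nlinarith
  push_cast at p1 p2 hx1 ⊢
  nlinarith [p1, p2, hx1]

lemma arith2 (m t a n x F E U : ℕ) (hm : 2 ≤ m) (ht3 : 3 ≤ t) (ha1 : 2 ≤ a) (ham : a ≤ m)
    (hxn : x ≤ n) (hx1 : (t * m - 2) * x ≤ (a - 1) * n)
    (hF : F + 1 ≤ m - a) (hE : E ≤ m * (t - 1)) (hU : U ≤ x) :
    F * n + E * U ≤ (m - 1) * (n - x) := by
  have h2tm : 2 ≤ t * m := le_trans (by norm_num) (Nat.mul_le_mul ht3 hm)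
  zify [ham, hxn, show (1:ℕ) ≤ m by omega, show (1:ℕ) ≤ a by omega,
    show (1:ℕ) ≤ t by omega, h2tm] at hx1 hF hE hU ⊢
  have p1 : (F : ℤ) * n ≤ ((m : ℤ) - a - 1) * n :=
    mul_le_mul_of_nonneg_right (by push_cast at hF ⊢; linarith) (by positivity)
  have p2 : (E : ℤ) * U ≤ ((m : ℤ) * ((t:ℤ) - 1)) * x := by
    have h4 : (2 : ℤ) ≤ (m : ℤ) := by exact_mod_cast hm
    have h5 : (3 : ℤ) ≤ (t : ℤ) := by exact_mod_cast ht3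
    refine mul_le_mul (by push_cast at hE ⊢; linarith) hU (by positivity) (by nlinarith)
  push_cast at p1 p2 hx1 ⊢
  nlinarith [p1, p2, hx1, hxn]

lemma PG_adj (m t x r n : ℕ) (v w : Fin r × Fin n) :
    (PG m t x r n).Adj v w ↔ v.1 ≠ w.1 ∧ pcol m t x v ≠ pcol m t x w := Iff.rfl

lemma PG_deg (m t x r n a : ℕ) (hm : 2 ≤ m) (ht3 : 3 ≤ t) (ha1 : 2 ≤ a) (ham : a ≤ m)
    (hat : a + 1 ≤ t) (hr : r = m * t - a) (hxn : x ≤ n)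
    (hx1 : (t * m - 2) * x ≤ (a - 1) * n) (v : Fin r × Fin n) :
    r * n ≤ (PG m t x r n).degree v + (n + (m - 1) * (n - x)) := by
  classical
  have hQm : m * (t - 1) + m = m * t := by
    have h : t - 1 + 1 = t := by omega
    calc m * (t - 1) + m = m * (t - 1 + 1) := by rw [Nat.mul_succ]
      _ = m * t := by rw [h]
  have hmMT : m ≤ m * t := Nat.le_mul_of_pos_right m (by omega)
  have haMT : a ≤ m * t := le_trans ham hmMT
  have hrq : r - m * (t - 1) = m - a := by omega
  have h2tm : 2 ≤ t * m := le_trans (by norm_num) (Nat.mul_le_mul ht3 hm)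
  have h1mt1 : 1 ≤ m * (t - 1) := by
    have : 2 * 2 ≤ m * (t - 1) := Nat.mul_le_mul hm (by omega)
    omega
  -- the non-neighbors
  set G := PG m t x r n with hG
  have hdeg : G.degree v + ((univ : Finset (Fin r × Fin n)).filter
      fun w => ¬ G.Adj v w).card = r * n := by
    have h1 : G.degree v = ((univ : Finset (Fin r × Fin n)).filter (G.Adj v)).card := by
      rw [SimpleGraph.degree, SimpleGraph.neighborFinset_eq_filter]
    rw [h1, Finset.card_filter_add_card_filter_not]
    simp
  have hmain : ((univ : Finset (Fin r × Fin n)).filter fun w => ¬ G.Adj v w).card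
      ≤ n + (m - 1) * (n - x) := by
    set Pv := (univ : Finset (Fin r × Fin n)).filter (fun w : Fin r × Fin n => w.1 = v.1)
      with hPvdef
    set Tv := (univ : Finset (Fin r × Fin n)).filter
      (fun w : Fin r × Fin n => w.1 ≠ v.1 ∧ pcol m t x w = pcol m t x v) with hTvdef
    have hsub : ((univ : Finset (Fin r × Fin n)).filter fun w => ¬ G.Adj v w) ⊆ Pv ∪ Tv := by
      intro w hw
      simp only [Finset.mem_filter, Finset.mem_univ, true_and, hG, PG_adj] at hw
      push_neg at hw
      simp only [Finset.mem_union, hPvdef, hTvdef, Finset.mem_filter, Finset.mem_univ, true_and]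
      by_cases h1 : w.1 = v.1
      · exact Or.inl h1
      · exact Or.inr ⟨h1, (hw (fun he => h1 he.symm)).symm⟩
    have hPv : Pv.card ≤ n := by
      have key : Pv.card ≤ (univ : Finset (Fin n)).card :=
        Finset.card_le_card_of_injOn (fun w => w.2) (fun w _ => Finset.mem_univ _)
          (by
            intro w1 h1 w2 h2 h
            simp only [Finset.mem_coe, hPvdef, Finset.mem_filter, Finset.mem_univ,
              true_and] at h1 h2
            exact Prod.ext (h1.trans h2.symm) h)
      simpa using key
    have hTv : Tv.card ≤ (m - 1) * (n - x) := by
      by_cases hcase : ((v.1 : ℕ) < m * (t - 1) ∧ x ≤ (v.2 : ℕ))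
      · -- principal color
        have hcv : pcol m t x v = (v.1 : ℕ) / m := by unfold pcol; rw [if_pos hcase]
        have hqlt : (v.1 : ℕ) / m < t - 1 :=
          Nat.div_lt_of_lt_mul (mul_comm m (t - 1) ▸ hcase.1)
        set Bv := (univ : Finset (Fin r)).filter
          (fun j : Fin r => (j : ℕ) / m = (v.1 : ℕ) / m) with hBvdef
        set Uv := (univ : Finset (Fin n)).filter (fun u : Fin n => x ≤ (u : ℕ)) with hUvdef
        have hTsub : Tv ⊆ (Bv.erase v.1) ×ˢ Uv := by
          intro w hw
          simp only [hTvdef, Finset.mem_filter, Finset.mem_univ, true_and] at hw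
          obtain ⟨hne, hcol⟩ := hw
          by_cases hb : ((w.1 : ℕ) < m * (t - 1) ∧ x ≤ (w.2 : ℕ))
          · have hcw : pcol m t x w = (w.1 : ℕ) / m := by unfold pcol; rw [if_pos hb]
            rw [Finset.mem_product]
            refine ⟨Finset.mem_erase.mpr ⟨hne, ?_⟩, ?_⟩
            · simp only [hBvdef, Finset.mem_filter, Finset.mem_univ, true_and]
              rw [← hcw, hcol, hcv]
            · simp only [hUvdef, Finset.mem_filter, Finset.mem_univ, true_and]
              exact hb.2
          · exfalso
            have hcw : pcol m t x w = t - 1 := by unfold pcol; rw [if_neg hb]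
            rw [hcw, hcv] at hcol
            omega
        have hBv : Bv.card ≤ m := card_filter_block r m _ (by omega)
        have hv1B : v.1 ∈ Bv := by
          simp only [hBvdef, Finset.mem_filter, Finset.mem_univ, true_and]
        have hbe : (Bv.erase v.1).card + 1 = Bv.card := Finset.card_erase_add_one hv1B
        have hUv : Uv.card ≤ n - x := card_filter_ub n x
        calc Tv.card ≤ ((Bv.erase v.1) ×ˢ Uv).card := Finset.card_le_card hTsub
          _ = (Bv.erase v.1).card * Uv.card := Finset.card_product _ _
          _ ≤ (m - 1) * (n - x) := Nat.mul_le_mul (by omega) hUv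
      · -- last color
        have hcv : pcol m t x v = t - 1 := by unfold pcol; rw [if_neg hcase]
        set Fv := ((univ : Finset (Fin r)).filter
          (fun j : Fin r => m * (t - 1) ≤ (j : ℕ))).erase v.1 with hFvdef
        set Ev := ((univ : Finset (Fin r)).filter
          (fun j : Fin r => (j : ℕ) < m * (t - 1))).erase v.1 with hEvdef
        set Uv' := (univ : Finset (Fin n)).filter (fun u : Fin n => (u : ℕ) < x) with hUdef
        have hTsub : Tv ⊆ (Fv ×ˢ (univ : Finset (Fin n))) ∪ (Ev ×ˢ Uv') := by
          intro w hw
          simp only [hTvdef, Finset.mem_filter, Finset.mem_univ, true_and] at hw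
          obtain ⟨hne, hcol⟩ := hw
          rw [hcv] at hcol
          by_cases hb : ((w.1 : ℕ) < m * (t - 1) ∧ x ≤ (w.2 : ℕ))
          · exfalso
            have hcw : pcol m t x w = (w.1 : ℕ) / m := by unfold pcol; rw [if_pos hb]
            have hqlt : (w.1 : ℕ) / m < t - 1 :=
              Nat.div_lt_of_lt_mul (mul_comm m (t - 1) ▸ hb.1)
            rw [hcw] at hcol
            omega
          · rw [Finset.mem_union, Finset.mem_product, Finset.mem_product]
            push_neg at hb
            by_cases hw1 : (w.1 : ℕ) < m * (t - 1)
            · refine Or.inr ⟨Finset.mem_erase.mpr ⟨hne, ?_⟩, ?_⟩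
              · simp only [hEvdef, Finset.mem_filter, Finset.mem_univ, true_and]
                exact hw1
              · simp only [hUdef, Finset.mem_filter, Finset.mem_univ, true_and]
                exact hb hw1
            · refine Or.inl ⟨Finset.mem_erase.mpr ⟨hne, ?_⟩, Finset.mem_univ _⟩
              simp only [hFvdef, Finset.mem_filter, Finset.mem_univ, true_and]
              omega
        have hF0 : ((univ : Finset (Fin r)).filter
            (fun j : Fin r => m * (t - 1) ≤ (j : ℕ))).card ≤ m - a := by
          have := card_filter_ge r (m * (t - 1))
          omega
        have hE0 : ((univ : Finset (Fin r)).filter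
            (fun j : Fin r => (j : ℕ) < m * (t - 1))).card ≤ m * (t - 1) :=
          card_filter_lt r (m * (t - 1))
        have hU' : Uv'.card ≤ x := card_filter_lt n x
        have hcard : Tv.card ≤ Fv.card * n + Ev.card * Uv'.card := by
          calc Tv.card ≤ ((Fv ×ˢ (univ : Finset (Fin n))) ∪ (Ev ×ˢ Uv')).card :=
              Finset.card_le_card hTsub
            _ ≤ (Fv ×ˢ (univ : Finset (Fin n))).card + (Ev ×ˢ Uv').card :=
              Finset.card_union_le _ _
            _ = Fv.card * n + Ev.card * Uv'.card := by
              rw [Finset.card_product, Finset.card_product]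
              simp
        -- case on position of v
        by_cases hv1 : (v.1 : ℕ) < m * (t - 1)
        · have hvE : v.1 ∈ (univ : Finset (Fin r)).filter
              (fun j : Fin r => (j : ℕ) < m * (t - 1)) := by
            simp only [Finset.mem_filter, Finset.mem_univ, true_and]; exact hv1
          have hEe : Ev.card + 1 = ((univ : Finset (Fin r)).filter
              (fun j : Fin r => (j : ℕ) < m * (t - 1))).card :=
            Finset.card_erase_add_one hvE
          have hFe : Fv.card ≤ m - a :=
            le_trans (Finset.card_le_card (Finset.erase_subset _ _)) hF0
          have hEc : Ev.card + 1 ≤ m * (t - 1) := by omega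
          -- arithmetic
          have hgoal : Fv.card * n + Ev.card * Uv'.card ≤ (m - 1) * (n - x) :=
            arith1 m t a n x _ _ _ hm ht3 ha1 ham hxn hx1 hFe hEc hU'
          omega
        · have hvF : v.1 ∈ (univ : Finset (Fin r)).filter
              (fun j : Fin r => m * (t - 1) ≤ (j : ℕ)) := by
            simp only [Finset.mem_filter, Finset.mem_univ, true_and]; omega
          have hFe : Fv.card + 1 = ((univ : Finset (Fin r)).filter
              (fun j : Fin r => m * (t - 1) ≤ (j : ℕ))).card :=
            Finset.card_erase_add_one hvF
          have hFc : Fv.card + 1 ≤ m - a := by omega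
          have hEe : Ev.card ≤ m * (t - 1) :=
            le_trans (Finset.card_le_card (Finset.erase_subset _ _)) hE0
          have hgoal : Fv.card * n + Ev.card * Uv'.card ≤ (m - 1) * (n - x) :=
            arith2 m t a n x _ _ _ hm ht3 ha1 ham hxn hx1 hFc hEe hU'
          omega
    calc ((univ : Finset (Fin r × Fin n)).filter fun w => ¬ G.Adj v w).card
        ≤ (Pv ∪ Tv).card := Finset.card_le_card hsub
      _ ≤ Pv.card + Tv.card := Finset.card_union_le _ _
      _ ≤ n + (m - 1) * (n - x) := Nat.add_le_add hPv hTv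
  calc r * n = G.degree v + ((univ : Finset (Fin r × Fin n)).filter
        fun w => ¬ G.Adj v w).card := hdeg.symm
    _ ≤ G.degree v + (n + (m - 1) * (n - x)) := Nat.add_le_add_left hmain _

set_option maxHeartbeats 2000000 in
lemma final_arith (n r m t a x f0 : ℕ) (hn : 1 ≤ n) (hm : 2 ≤ m) (ht3 : 3 ≤ t)
    (ha1 : 2 ≤ a) (ham : a ≤ m) (hat : a + 1 ≤ t) (hr : r = m * t - a) (hxn : x ≤ n)
    (hx1 : (t * m - 2) * x ≤ (a - 1) * n)
    (hx2 : (a - 1) * n + 1 ≤ (t * m - 2) * x + (t * m - 2))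
    (hcond : (r : ℚ) / (t * (3 * t - 1) * (m - 1)) - (a : ℚ) / (t * (m - 1))
      + ((a : ℚ) - 1) / (t * m - 2) ≥ 1 / n)
    (hf : r * n ≤ f0 + (n + (m - 1) * (n - x))) :
    ((3 * t - 4 : ℚ) / (3 * t - 1)) * (r * n) < f0 := by
  have h2tm : 2 ≤ t * m := le_trans (by norm_num) (Nat.mul_le_mul ht3 hm)
  have haMT : a ≤ m * t := le_trans ham (Nat.le_mul_of_pos_right m (by omega))
  -- cast facts
  have hT : (3 : ℚ) ≤ (t : ℚ) := by exact_mod_cast ht3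
  have hM : (2 : ℚ) ≤ (m : ℚ) := by exact_mod_cast hm
  have hA : (2 : ℚ) ≤ (a : ℚ) := by exact_mod_cast ha1
  have hN : (1 : ℚ) ≤ (n : ℚ) := by exact_mod_cast hn
  have hX : (0 : ℚ) ≤ (x : ℚ) := by positivity
  have hAM : (a : ℚ) ≤ (m : ℚ) := by exact_mod_cast ham
  have hAT : (a : ℚ) + 1 ≤ (t : ℚ) := by exact_mod_cast hat
  have hrq : (r : ℚ) = (m : ℚ) * t - a := by
    rw [hr]
    push_cast [Nat.cast_sub haMT]
    ring
  have hx1q : ((t : ℚ) * m - 2) * x ≤ ((a : ℚ) - 1) * n := by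
    have := hx1
    qify [h2tm, show (1:ℕ) ≤ a by omega] at this
    convert this using 2 <;> push_cast <;> ring
  have hx2q : ((a : ℚ) - 1) * n + 1 ≤ ((t : ℚ) * m - 2) * x + ((t : ℚ) * m - 2) := by
    have := hx2
    qify [h2tm, show (1:ℕ) ≤ a by omega] at this
    convert this using 2 <;> push_cast <;> ring
  have hfq : ((m : ℚ) * t - a) * n ≤ (f0 : ℚ) + ((n : ℚ) + ((m : ℚ) - 1) * ((n : ℚ) - x)) := by
    have := hf
    qify [hxn, show (1:ℕ) ≤ m by omega] at this
    rw [hrq] at this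
    convert this using 2 <;> push_cast <;> ring
  -- positivity of denominators
  have hTpos : (0 : ℚ) < t := by linarith
  have h3T1 : (0 : ℚ) < 3 * (t : ℚ) - 1 := by linarith
  have hM1 : (0 : ℚ) < (m : ℚ) - 1 := by linarith
  have hTM2 : (0 : ℚ) < (t : ℚ) * m - 2 := by nlinarith
  have hNpos : (0 : ℚ) < n := by linarith
  have hD : (0 : ℚ) < (t : ℚ) * (3 * t - 1) * ((m : ℚ) - 1) * ((t : ℚ) * m - 2) :=
    mul_pos (mul_pos (mul_pos hTpos h3T1) hM1) hTM2
  -- transform hcond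
  rw [hrq] at hcond
  have e1 : ((m : ℚ) * t - a) / (t * (3 * t - 1) * (m - 1)) - (a : ℚ) / (t * (m - 1))
      + ((a : ℚ) - 1) / (t * m - 2)
      = ((t : ℚ) * (((t : ℚ) * m - 2) * ((m : ℚ) - 3 * a)
          + (3 * (t : ℚ) - 1) * ((m : ℚ) - 1) * ((a : ℚ) - 1)))
        / ((t : ℚ) * (3 * t - 1) * ((m : ℚ) - 1) * ((t : ℚ) * m - 2)) := by
    have hB := (mul_pos (mul_pos hTpos h3T1) hM1).ne'
    have hD' := (mul_pos hTpos hM1).ne'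
    rw [div_sub_div _ _ hB hD', div_add_div _ _ (mul_ne_zero hB hD') hTM2.ne',
      div_eq_div_iff (mul_ne_zero (mul_ne_zero hB hD') hTM2.ne') hD.ne']
    ring
  rw [e1, ge_iff_le, div_le_div_iff₀ hNpos hD] at hcond
  -- hcond : 1 * D ≤ (T * C) * N
  have hkey : (3 * (t : ℚ) - 1) * ((m : ℚ) - 1) * ((t : ℚ) * m - 2)
      ≤ (n : ℚ) * (((t : ℚ) * m - 2) * ((m : ℚ) - 3 * a)
        + (3 * (t : ℚ) - 1) * ((m : ℚ) - 1) * ((a : ℚ) - 1)) := by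
    have h' : (t : ℚ) * ((3 * (t : ℚ) - 1) * ((m : ℚ) - 1) * ((t : ℚ) * m - 2))
        ≤ (t : ℚ) * ((n : ℚ) * (((t : ℚ) * m - 2) * ((m : ℚ) - 3 * a)
          + (3 * (t : ℚ) - 1) * ((m : ℚ) - 1) * ((a : ℚ) - 1))) := by
      linarith [hcond]
    exact (mul_le_mul_iff_of_pos_left hTpos).mp h'
  -- main positivity
  have h7 := mul_le_mul_of_nonneg_left hx2q (by positivity : (0:ℚ) ≤ (3 * (t:ℚ) - 1) * ((m:ℚ) - 1))
  have h6 : (3 * (t : ℚ) - 1) * ((m : ℚ) - 1)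
      ≤ ((t : ℚ) * m - 2) * ((n : ℚ) * ((m : ℚ) - 3 * a)
        + (3 * (t : ℚ) - 1) * ((m : ℚ) - 1) * x) := by nlinarith [hkey, h7]
  have h8 : (0 : ℚ) < (n : ℚ) * ((m : ℚ) - 3 * a) + (3 * (t : ℚ) - 1) * ((m : ℚ) - 1) * x := by
    by_contra hS
    push_neg at hS
    have : ((t : ℚ) * m - 2) * ((n : ℚ) * ((m : ℚ) - 3 * a)
        + (3 * (t : ℚ) - 1) * ((m : ℚ) - 1) * x) ≤ 0 :=
      mul_nonpos_of_nonneg_of_nonpos hTM2.le hS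
    nlinarith [h6, h3T1, hM1]
  -- conclude
  rw [div_mul_eq_mul_div, div_lt_iff₀ h3T1]
  have h9 := mul_le_mul_of_nonneg_left hfq (le_of_lt h3T1)
  push_cast [hrq]
  nlinarith [h9, h8]
/-- Let `m, t ≥ 2` and `r = mt - a` with `2 ≤ a ≤ min{m, t-1}`. If
`r/(t(3t-1)(m-1)) - a/(t(m-1)) + (a-1)/(tm-2) ≥ 1/n`, then (assuming the
Andrásfai–Erdős–Sós theorem) `f(n,r,t+1) = δ(n,r,t)`. -/
theorem stmt12 (n r m t a : ℕ) (hn : 1 ≤ n) (hm : 2 ≤ m) (ht : 2 ≤ t)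
    (ha1 : 2 ≤ a) (ha2 : a ≤ min m (t - 1)) (hr : r = m * t - a)
    (hcond : (r : ℚ) / (t * (3 * t - 1) * (m - 1)) - (a : ℚ) / (t * (m - 1))
      + ((a : ℚ) - 1) / (t * m - 2) ≥ 1 / n)
    (hAES : ∀ G : SimpleGraph (Fin r × Fin n), G.CliqueFree (t + 1) →
      ((3 * t - 4 : ℚ) / (3 * t - 1)) * (r * n) < G.minDegree →
      G.chromaticNumber ≤ (t : ℕ∞)) :
    f n r (t + 1) = deltaP n r t := by
  classical
  have ham : a ≤ m := le_trans ha2 (min_le_left _ _)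
  have hat1 : a ≤ t - 1 := le_trans ha2 (min_le_right _ _)
  have ht3 : 3 ≤ t := by omega
  have hat : a + 1 ≤ t := by omega
  have htm2 : 0 < t * m - 2 := by
    have := Nat.mul_le_mul ht3 hm
    omega
  set x := (a - 1) * n / (t * m - 2) with hxdef
  have hx1 : (t * m - 2) * x ≤ (a - 1) * n := by
    rw [hxdef, mul_comm]
    exact Nat.div_mul_le_self _ _
  have hx2 : (a - 1) * n + 1 ≤ (t * m - 2) * x + (t * m - 2) := by
    have h := Nat.div_add_mod ((a - 1) * n) (t * m - 2)
    have h2 : (a - 1) * n % (t * m - 2) + 1 ≤ t * m - 2 := Nat.mod_lt _ htm2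
    calc (a - 1) * n + 1 = (t * m - 2) * x + ((a - 1) * n % (t * m - 2) + 1) := by
          rw [← Nat.add_assoc, hxdef, h]
      _ ≤ (t * m - 2) * x + (t * m - 2) := Nat.add_le_add_left h2 _
  have hxn : x ≤ n := by
    have htm : t ≤ t * m := Nat.le_mul_of_pos_right t (by omega)
    have h1 : (a - 1) * n ≤ (t * m - 2) * n :=
      Nat.mul_le_mul_right n (by omega)
    calc x = (a - 1) * n / (t * m - 2) := rfl
      _ ≤ (t * m - 2) * n / (t * m - 2) := Nat.div_le_div_right h1
      _ = n := Nat.mul_div_cancel_left n htm2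
  have hrpos : 0 < r := by
    have h1 : 2 * t ≤ m * t := Nat.mul_le_mul_right t hm
    omega
  haveI : Nonempty (Fin r × Fin n) := ⟨(⟨0, hrpos⟩, ⟨0, hn⟩)⟩
  set G0 := PG m t x r n with hG0
  have hG0p : IsPartite G0 := fun _ _ h => h.1
  have hG0chrom : G0.chromaticNumber ≤ (t : ℕ∞) :=
    (PG_colorable m t x r n (by omega) (by omega)).chromaticNumber_le
  -- bounded
  have hdeg_le : ∀ (G : SimpleGraph (Fin r × Fin n)) (v : Fin r × Fin n),
      G.degree v ≤ r * n := by
    intro G v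
    have h1 : (G.neighborFinset v).card ≤ (univ : Finset (Fin r × Fin n)).card :=
      Finset.card_le_univ _
    simpa using h1
  have hBf : BddAbove {d | ∃ G : SimpleGraph (Fin r × Fin n),
      IsPartite G ∧ G.CliqueFree (t + 1) ∧ G.minDegree = d} := by
    refine ⟨r * n, fun d hd => ?_⟩
    obtain ⟨G, _, _, hGd⟩ := hd
    rw [← hGd]
    exact le_trans (G.minDegree_le_degree (Classical.arbitrary _)) (hdeg_le G _)
  have hBδ : BddAbove {d | ∃ G : SimpleGraph (Fin r × Fin n),
      IsPartite G ∧ G.chromaticNumber ≤ (t : ℕ∞) ∧ G.minDegree = d} := by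
    refine ⟨r * n, fun d hd => ?_⟩
    obtain ⟨G, _, _, hGd⟩ := hd
    rw [← hGd]
    exact le_trans (G.minDegree_le_degree (Classical.arbitrary _)) (hdeg_le G _)
  have hsub : {d | ∃ G : SimpleGraph (Fin r × Fin n),
      IsPartite G ∧ G.chromaticNumber ≤ (t : ℕ∞) ∧ G.minDegree = d}
      ⊆ {d | ∃ G : SimpleGraph (Fin r × Fin n),
      IsPartite G ∧ G.CliqueFree (t + 1) ∧ G.minDegree = d} := by
    rintro d ⟨G, hp, hχ, hd⟩
    exact ⟨G, hp, (SimpleGraph.chromaticNumber_le_iff_colorable.mp hχ).cliqueFree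
      (Nat.lt_succ_self t), hd⟩
  have hmemδ : G0.minDegree ∈ {d | ∃ G : SimpleGraph (Fin r × Fin n),
      IsPartite G ∧ G.chromaticNumber ≤ (t : ℕ∞) ∧ G.minDegree = d} :=
    ⟨G0, hG0p, hG0chrom, rfl⟩
  have hd1 : deltaP n r t ≤ f n r (t + 1) := csSup_le_csSup hBf ⟨_, hmemδ⟩ hsub
  have hdegb : r * n ≤ G0.minDegree + (n + (m - 1) * (n - x)) := by
    obtain ⟨v0, hv0⟩ := G0.exists_minimal_degree_vertex
    rw [hv0]
    exact PG_deg m t x r n a hm ht3 ha1 ham hat hr hxn hx1 v0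
  have hδb : G0.minDegree ≤ deltaP n r t := le_csSup hBδ hmemδ
  have hfmem : f n r (t + 1) ∈ {d | ∃ G : SimpleGraph (Fin r × Fin n),
      IsPartite G ∧ G.CliqueFree (t + 1) ∧ G.minDegree = d} :=
    Nat.sSup_mem ⟨_, hsub hmemδ⟩ hBf
  obtain ⟨G, hGp, hGcf, hGd⟩ := hfmem
  have hf0 : r * n ≤ f n r (t + 1) + (n + (m - 1) * (n - x)) := by
    have h1 : G0.minDegree ≤ f n r (t + 1) := le_trans hδb hd1
    omega
  have hkey : ((3 * t - 4 : ℚ) / (3 * t - 1)) * (r * n) < (f n r (t + 1) : ℚ) :=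
    final_arith n r m t a x _ hn hm ht3 ha1 ham hat hr hxn hx1 hx2 hcond hf0
  have hχG : G.chromaticNumber ≤ (t : ℕ∞) := by
    refine hAES G hGcf ?_
    rw [hGd]
    exact hkey
  have hfδ : f n r (t + 1) ∈ {d | ∃ G : SimpleGraph (Fin r × Fin n),
      IsPartite G ∧ G.chromaticNumber ≤ (t : ℕ∞) ∧ G.minDegree = d} :=
    ⟨G, hGp, hχG, hGd⟩
  exact le_antisymm (le_csSup hBδ hfδ) hd1
end

section
/- Let $m, t \ge 3$ and $r = mt - 1$. Then $\delta(n,r,t) = (m(t-1)-1)n$, i.e., the maximum minimum degree among $r$-partite graphs with parts of size $n$ and chromatic number at most $t$ equals $(r-m)n$. -/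
open scoped Classical

lemma matrix_lemma (n m t r : ℕ) (hn : 1 ≤ n) (ht : 2 ≤ t) (hrt : r + 1 = m * t)
    (a : Fin t → Fin r → ℕ)
    (hcol : ∀ j, ∑ i, a i j = n)
    (hrow : ∀ i j, 0 < a i j → (∑ j', a i j') + n + 1 ≤ m * n + a i j) : False := by
  have hm : 1 ≤ m := by
    rcases Nat.eq_zero_or_pos m with h | h
    · subst h; simp at hrt
    · exact h
  have hmax : ∀ i j, a i j ≤ n := by
    intro i j
    rw [← hcol j]
    exact Finset.single_le_sum (f := fun k => a k j) (fun _ _ => Nat.zero_le _)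
      (Finset.mem_univ i)
  have hRb : ∀ i, (∑ j', a i j') + 1 ≤ m * n := by
    intro i
    by_cases h : ∃ j, 0 < a i j
    · obtain ⟨j, hj⟩ := h
      have h1 := hrow i j hj
      have h2 := hmax i j
      omega
    · push_neg at h
      have h0 : (∑ j', a i j') = 0 := Finset.sum_eq_zero fun j _ => by have := h j; omega
      have h1 : 1 ≤ m * n := Nat.one_le_iff_ne_zero.2 (by positivity)
      omega
  set s : Fin t → ℕ := fun i => m * n - (∑ j', a i j') with hs
  have hRs : ∀ i, (∑ j', a i j') + s i = m * n := fun i => by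
    have := hRb i; simp only [hs]; omega
  have htot : ∑ i, ∑ j', a i j' = r * n := by
    rw [Finset.sum_comm]
    simp [hcol, Finset.sum_const, Finset.card_univ]
  have hssum : ∑ i, s i = n := by
    have h1 : ∑ i, ((∑ j', a i j') + s i) = t * (m * n) := by
      simp [hRs, Finset.sum_const, Finset.card_univ, mul_comm]
    rw [Finset.sum_add_distrib, htot] at h1
    have h2 : t * (m * n) = (r + 1) * n := by rw [hrt]; ring
    have h3 : (r + 1) * n = r * n + n := by ring
    omega
  have key : ∀ i j, 0 < a i j → n + 1 ≤ a i j + s i := by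
    intro i j hij
    have h1 := hrow i j hij
    have h2 := hRs i
    omega
  have hmono : ∀ j i i', 0 < a i j → 0 < a i' j → i = i' := by
    intro j i i' hi hi'
    by_contra hne
    have h1 : a i j + a i' j ≤ n := by
      rw [← hcol j]
      calc a i j + a i' j = ∑ k ∈ ({i, i'} : Finset (Fin t)), a k j := by
            rw [Finset.sum_pair hne]
        _ ≤ ∑ k, a k j := Finset.sum_le_sum_of_subset (Finset.subset_univ _)
    have h2 : s i + s i' ≤ n := by
      rw [← hssum]
      calc s i + s i' = ∑ k ∈ ({i, i'} : Finset (Fin t)), s k := by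
            rw [Finset.sum_pair hne]
        _ ≤ ∑ k, s k := Finset.sum_le_sum_of_subset (Finset.subset_univ _)
    have := key i j hi
    have := key i' j hi'
    omega
  have hex : ∀ j, ∃ i, 0 < a i j := by
    intro j
    by_contra h
    push_neg at h
    have h0 : ∑ i, a i j = 0 := Finset.sum_eq_zero fun i _ => by have := h i; omega
    rw [hcol j] at h0
    omega
  choose f hf using hex
  have hfiber : ∀ i, n * (Finset.univ.filter fun j => f j = i).card ≤ ∑ j', a i j' := by
    intro i
    calc n * (Finset.univ.filter fun j => f j = i).card
        = ∑ j ∈ Finset.univ.filter (fun j => f j = i), n := by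
          rw [Finset.sum_const, smul_eq_mul, mul_comm]
      _ ≤ ∑ j ∈ Finset.univ.filter (fun j => f j = i), a i j := by
          apply Finset.sum_le_sum
          intro j hj
          simp only [Finset.mem_filter] at hj
          have haj : a i j = ∑ k, a k j := by
            symm
            apply Finset.sum_eq_single
            · intro k _ hk
              by_contra h
              have hk2 : k = i := by
                have := hmono j k (f j) (Nat.pos_of_ne_zero h) (hf j)
                rw [this, hj.2]
              exact hk hk2
            · intro h; exact absurd (Finset.mem_univ i) h
          rw [haj, hcol j]
      _ ≤ ∑ j', a i j' := Finset.sum_le_sum_of_subset (Finset.subset_univ _)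
  have hcount : ∑ i, (Finset.univ.filter fun j => f j = i).card = r := by
    have h1 : (Finset.univ : Finset (Fin r)).card = r := by simp
    exact ((Finset.card_eq_sum_card_fiberwise
      (fun x (_ : x ∈ (Finset.univ : Finset (Fin r))) => Finset.mem_univ (f x))).symm).trans h1
  have hbig : ∃ i, m ≤ (Finset.univ.filter fun j => f j = i).card := by
    by_contra h
    push_neg at h
    have h1 : ∑ i, ((Finset.univ.filter fun j => f j = i).card + 1) ≤ ∑ _i : Fin t, m :=
      Finset.sum_le_sum fun i _ => by have := h i; omega
    rw [Finset.sum_add_distrib, hcount] at h1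
    simp only [Finset.sum_const, Finset.card_univ, Fintype.card_fin, smul_eq_mul] at h1
    have h2 : t * m = m * t := mul_comm t m
    omega
  obtain ⟨i, hi⟩ := hbig
  have h1 := hfiber i
  have h2 := hRb i
  have h3 : n * m ≤ n * (Finset.univ.filter fun j => f j = i).card :=
    Nat.mul_le_mul_left n hi
  have hmn : n * m = m * n := mul_comm n m
  omega

lemma card_part_eq {r n : ℕ} (j : Fin r) :
    (Finset.univ.filter fun w : Fin r × Fin n => w.1 = j).card = n := by
  have : (Finset.univ.filter fun w : Fin r × Fin n => w.1 = j)
      = ({j} : Finset (Fin r)) ×ˢ Finset.univ := by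
    ext ⟨w1, w2⟩
    simp [Finset.mem_product, eq_comm]
  rw [this]
  simp [Finset.card_product]

/-- Upper bound: any partite `t`-colorable graph has min degree at most `(r-m)n`. -/
lemma upper_bound_s16 (n m t r : ℕ) (hn : 1 ≤ n) (ht : 2 ≤ t) (hrt : r + 1 = m * t)
    (hD : r * n = (m * (t - 1) - 1) * n + m * n)
    (G : SimpleGraph (Fin r × Fin n)) [DecidableRel G.Adj] (hP : IsPartite G)
    (hc : G.Colorable t) : G.minDegree ≤ (m * (t - 1) - 1) * n := by
  set D := (m * (t - 1) - 1) * n with hDdef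
  by_contra hlt
  push_neg at hlt
  obtain ⟨c⟩ := hc
  set a : Fin t → Fin r → ℕ :=
    fun i j => (Finset.univ.filter fun w : Fin r × Fin n => c w = i ∧ w.1 = j).card with ha
  apply matrix_lemma n m t r hn ht hrt a
  · -- column sums
    intro j
    have h1 : (Finset.univ.filter fun w : Fin r × Fin n => w.1 = j).card
        = ∑ i, ((Finset.univ.filter fun w : Fin r × Fin n => w.1 = j).filter
            fun w => c w = i).card :=
      Finset.card_eq_sum_card_fiberwise fun x _ => Finset.mem_univ (c x)
    have h2 : ∀ i, ((Finset.univ.filter fun w : Fin r × Fin n => w.1 = j).filter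
        fun w => c w = i) = Finset.univ.filter fun w : Fin r × Fin n => c w = i ∧ w.1 = j := by
      intro i
      rw [Finset.filter_filter]
      apply Finset.filter_congr
      intro x _
      tauto
    calc ∑ i, a i j
        = ∑ i, ((Finset.univ.filter fun w : Fin r × Fin n => w.1 = j).filter
            fun w => c w = i).card := by
          apply Finset.sum_congr rfl
          intro i _
          rw [ha, h2 i]
      _ = n := by rw [← h1, card_part_eq j]
  · -- row condition
    intro i j hij
    have hwex : ∃ w : Fin r × Fin n, c w = i ∧ w.1 = j := by
      rw [ha] at hij
      obtain ⟨w, hw⟩ := Finset.card_pos.mp hij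
      simp only [Finset.mem_filter, Finset.mem_univ, true_and] at hw
      exact ⟨w, hw⟩
    obtain ⟨w, hci, hwj⟩ := hwex
    set C := Finset.univ.filter fun w : Fin r × Fin n => c w = i with hC
    set P := Finset.univ.filter fun w : Fin r × Fin n => w.1 = j with hPj
    have hrowsum : ∑ j', a i j' = C.card := by
      have h1 : C.card = ∑ j', (C.filter fun w => w.1 = j').card :=
        Finset.card_eq_sum_card_fiberwise fun x _ => Finset.mem_univ x.1
      rw [h1]
      apply Finset.sum_congr rfl
      intro j' _
      simp only [ha, hC, Finset.filter_filter]
    have hNdisj : Disjoint (G.neighborFinset w) (C ∪ P) := by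
      rw [Finset.disjoint_left]
      intro x hx hxCP
      rw [SimpleGraph.mem_neighborFinset] at hx
      rcases Finset.mem_union.mp hxCP with h | h
      · simp only [hC, Finset.mem_filter] at h
        exact (c.valid hx) (hci.trans h.2.symm)
      · simp only [hPj, Finset.mem_filter] at h
        exact (hP w x hx) (hwj.trans h.2.symm)
    have hcardU : ((Finset.univ : Finset (Fin r × Fin n))).card = r * n := by simp
    have h2 : G.degree w + (C ∪ P).card ≤ r * n := by
      rw [← hcardU, SimpleGraph.degree, ← Finset.card_union_of_disjoint hNdisj]
      exact Finset.card_le_card (Finset.subset_univ _)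
    have h3 : (C ∪ P).card + (C ∩ P).card = C.card + P.card :=
      Finset.card_union_add_card_inter C P
    have h4 : (C ∩ P).card = a i j := by
      have : C ∩ P = Finset.univ.filter fun w : Fin r × Fin n => c w = i ∧ w.1 = j := by
        ext x
        simp [hC, hPj]
      rw [this, ha]
    have h5 : P.card = n := card_part_eq j
    have h6 : D + 1 ≤ G.degree w := le_trans hlt (G.minDegree_le_degree w)
    rw [hrowsum]
    omega


lemma lower_bound (n m t r : ℕ) (hn : 1 ≤ n) (hm : 1 ≤ m) (ht : 2 ≤ t)
    (hrt : r + 1 = m * t) (hmr : m ≤ r) :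
    ∃ G : SimpleGraph (Fin r × Fin n), IsPartite G ∧ G.chromaticNumber ≤ (t : ℕ∞) ∧
      G.minDegree = (r - m) * n := by
  have hm0 : 0 < m := hm
  have hr0 : 0 < r := by omega
  set G : SimpleGraph (Fin r × Fin n) :=
    { Adj := fun v w => (v.1 : ℕ) / m ≠ (w.1 : ℕ) / m
      symm := ⟨fun v w h => Ne.symm h⟩
      loopless := ⟨fun v h => h rfl⟩ } with hG
  have hAdj : ∀ v w : Fin r × Fin n, G.Adj v w ↔ (v.1 : ℕ) / m ≠ (w.1 : ℕ) / m :=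
    fun _ _ => Iff.rfl
  letI : DecidableRel G.Adj := fun a b => Classical.propDecidable (G.Adj a b)
  refine ⟨G, ?_, ?_, ?_⟩
  · intro v w h hvw
    exact (hAdj v w).mp h (by rw [hvw])
  · -- chromatic number
    have hq : ∀ j : Fin r, (j : ℕ) / m < t := by
      intro j
      rw [Nat.div_lt_iff_lt_mul hm0]
      have : (j : ℕ) < r := j.2
      have h2 : t * m = m * t := mul_comm t m
      omega
    have hcol : G.Colorable t :=
      ⟨SimpleGraph.Coloring.mk (fun v => (⟨(v.1 : ℕ) / m, hq v.1⟩ : Fin t))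
        (fun {v w} h => by
          simp only [Fin.ne_iff_vne]
          exact (hAdj v w).mp h)⟩
    exact hcol.chromaticNumber_le
  · -- min degree
    have hNfin : ∀ v : Fin r × Fin n, G.neighborFinset v =
        (Finset.univ.filter fun j : Fin r => ¬ (j : ℕ) / m = (v.1 : ℕ) / m) ×ˢ
          Finset.univ := by
      intro v
      ext ⟨w1, w2⟩
      rw [SimpleGraph.mem_neighborFinset, hAdj]
      simp [Finset.mem_product, ne_comm]
    have hdeg : ∀ v : Fin r × Fin n, G.degree v =
        (Finset.univ.filter fun j : Fin r => ¬ (j : ℕ) / m = (v.1 : ℕ) / m).card * n := by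
      intro v
      rw [SimpleGraph.degree, hNfin v, Finset.card_product]
      simp
    have hB : ∀ v : Fin r × Fin n,
        (Finset.univ.filter fun j : Fin r => ¬ (j : ℕ) / m = (v.1 : ℕ) / m).card
          + (Finset.univ.filter fun j : Fin r => (j : ℕ) / m = (v.1 : ℕ) / m).card = r := by
      intro v
      rw [add_comm]
      have := Finset.card_filter_add_card_filter_not
        (s := (Finset.univ : Finset (Fin r)))
        (p := fun j : Fin r => (j : ℕ) / m = (v.1 : ℕ) / m)
      simpa using this
    have hBle : ∀ q : ℕ,
        (Finset.univ.filter fun j : Fin r => (j : ℕ) / m = q).card ≤ m := by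
      intro q
      have h1 : (Finset.univ.filter fun j : Fin r => (j : ℕ) / m = q).card
          ≤ (Finset.univ : Finset (Fin m)).card := by
        refine Finset.card_le_card_of_injOn
          (fun j => (⟨(j : ℕ) % m, Nat.mod_lt _ hm0⟩ : Fin m))
          (fun a _ => Finset.mem_univ _) ?_
        intro j1 hj1 j2 hj2 hmod
        simp only [Finset.coe_filter, Set.mem_setOf_eq, Finset.mem_univ, true_and] at hj1 hj2
        have hmod' : (j1 : ℕ) % m = (j2 : ℕ) % m := by
          have := congrArg Fin.val hmod
          simpa using this
        have e1 := Nat.div_add_mod (j1 : ℕ) m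
        have e2 := Nat.div_add_mod (j2 : ℕ) m
        rw [hj1] at e1
        rw [hj2] at e2
        apply Fin.ext
        omega
      simpa using h1
    -- the chosen vertex
    set v0 : Fin r × Fin n := (⟨0, hr0⟩, ⟨0, hn⟩) with hv0
    haveI : Nonempty (Fin r × Fin n) := ⟨v0⟩
    have hB0 : (Finset.univ.filter fun j : Fin r => (j : ℕ) / m = (v0.1 : ℕ) / m).card = m := by
      have hzero : ((v0.1 : ℕ)) / m = 0 := by simp [hv0]
      refine le_antisymm (by rw [hzero]; exact hBle 0) ?_
      have h2 : (Finset.univ : Finset (Fin m)).card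
          ≤ (Finset.univ.filter fun j : Fin r => (j : ℕ) / m = (v0.1 : ℕ) / m).card := by
        refine Finset.card_le_card_of_injOn
          (fun x : Fin m => (⟨(x : ℕ), lt_of_lt_of_le x.2 hmr⟩ : Fin r))
          (fun x _ => ?_) ?_
        · simp only [Finset.coe_filter, Set.mem_setOf_eq, Finset.mem_filter, Finset.mem_univ, true_and]
          rw [hzero]
          exact Nat.div_eq_of_lt x.2
        · intro x1 _ x2 _ hx
          apply Fin.ext
          have := congrArg Fin.val hx
          simpa using this
      simpa using h2
    have hdeg0 : G.degree v0 = (r - m) * n := by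
      rw [hdeg v0]
      congr 1
      have := hB v0
      omega
    refine le_antisymm ?_ ?_
    · rw [← hdeg0]
      exact G.minDegree_le_degree v0
    · apply SimpleGraph.le_minDegree_of_forall_le_degree
      intro v
      rw [hdeg v]
      apply Nat.mul_le_mul_right
      have h1 := hB v
      have h2 := hBle ((v.1 : ℕ) / m)
      omega

/-- For `m, t ≥ 3` and `r = mt - 1`, `δ(n,r,t) = (m(t-1)-1)n = (r-m)n`. -/
theorem stmt16 (n m t r : ℕ) (hn : 1 ≤ n) (hm : 3 ≤ m) (ht : 3 ≤ t) (hr : r = m * t - 1) :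
    deltaP n r t = (m * (t - 1) - 1) * n := by
  have ht2 : 2 ≤ t := by omega
  have hmt : 2 ≤ m * t := le_trans (by omega) (Nat.mul_le_mul hm ht)
  have hrt : r + 1 = m * t := by omega
  have hmrarith : (m * (t - 1) - 1) + m = r := by
    obtain ⟨u, rfl⟩ : ∃ u, t = u + 1 := ⟨t - 1, by omega⟩
    have h1 : m * (u + 1) = m * u + m := by ring
    have h2 : m * (u + 1 - 1) = m * u := by simp
    have h3 : 2 ≤ m * u := by
      have := Nat.mul_le_mul (show 1 ≤ m by omega) (show 2 ≤ u by omega)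
      simpa using this
    omega
  have hD : r * n = (m * (t - 1) - 1) * n + m * n := by
    rw [← Nat.add_mul, hmrarith]
  obtain ⟨G0, hG0P, hG0c, hG0d⟩ :=
    lower_bound n m t r hn (by omega) ht2 hrt (by omega)
  have hrm : (r - m) * n = (m * (t - 1) - 1) * n := by
    congr 1
    omega
  have hmem : (m * (t - 1) - 1) * n ∈ {d | ∃ G : SimpleGraph (Fin r × Fin n),
      IsPartite G ∧ G.chromaticNumber ≤ (t : ℕ∞) ∧ G.minDegree = d} :=
    ⟨G0, hG0P, hG0c, by rw [hG0d, hrm]⟩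
  have hub : ∀ d ∈ {d | ∃ G : SimpleGraph (Fin r × Fin n),
      IsPartite G ∧ G.chromaticNumber ≤ (t : ℕ∞) ∧ G.minDegree = d},
      d ≤ (m * (t - 1) - 1) * n := by
    rintro d ⟨G, hP, hchi, rfl⟩
    exact upper_bound_s16 n m t r hn ht2 hrt hD G hP
      (SimpleGraph.chromaticNumber_le_iff_colorable.mp hchi)
  rw [deltaP]
  exact le_antisymm (csSup_le ⟨_, hmem⟩ hub) (le_csSup ⟨_, hub⟩ hmem)
end

section
/- Let $r_0 \ge t_0 \ge 2$ and let $\Delta_0 \ge 0$ satisfy: for every $n_0 \ge 1$ there is an $r_0$-partite graph with parts of size $n_0$, maximum degree at most $\Delta_0 n_0$, and no crossing independent set of size $t_0$. Then for all integers $n, k \ge 2$, with $r = r_0 k$ and $t = k + t_0$, there is an $r$-partite graph $G$ with parts of size $n$, no crossing independent set of size $t$, and $\Delta(G) \le (r_0 - 1) \lceil \frac{\Delta_0 + (k-1)r_0}{\Delta_0 + k r_0 - 1} \cdot n \rceil$. -/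
open scoped Classical

/-- `s` is a crossing independent set in the `r`-partite graph `G` on `Fin r × Fin n`
(parts are the fibers of `Prod.fst`): its vertices are pairwise non-adjacent and lie in
pairwise distinct parts. -/
def CrossIndep {r n : ℕ} (G : SimpleGraph (Fin r × Fin n))
    (s : Finset (Fin r × Fin n)) : Prop :=
  ∀ v ∈ s, ∀ w ∈ s, v ≠ w → ¬G.Adj v w ∧ v.1 ≠ w.1

/-- The blown-up construction: parts grouped into `k` blocks of `r₀` consecutive parts
(block of a part `a` is `a / r₀`).  In each part, the first `m` vertices are "core",
the rest are "rest".  Cores are complete across distinct parts within a block;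
rests are complete across distinct blocks; within each block, a copy of `G₀` sits
on the rests. -/
def pGraph (r₀ k n m : ℕ) (G₀ : SimpleGraph (Fin r₀ × Fin (n - m))) :
    SimpleGraph (Fin (r₀ * k) × Fin n) where
  Adj v w := v ≠ w ∧
    ((v.1.val / r₀ = w.1.val / r₀ ∧ v.1 ≠ w.1 ∧ v.2.val < m ∧ w.2.val < m) ∨
     (v.1.val / r₀ ≠ w.1.val / r₀ ∧ m ≤ v.2.val ∧ m ≤ w.2.val) ∨
     (v.1.val / r₀ = w.1.val / r₀ ∧ m ≤ v.2.val ∧ m ≤ w.2.val ∧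
       ∃ a b : Fin r₀ × Fin (n - m),
         a.1.val = v.1.val % r₀ ∧ a.2.val = v.2.val - m ∧
         b.1.val = w.1.val % r₀ ∧ b.2.val = w.2.val - m ∧ G₀.Adj a b))
  symm := by
    constructor
    rintro v w ⟨hne, h⟩
    refine ⟨hne.symm, ?_⟩
    rcases h with ⟨h1, h2, h3, h4⟩ | ⟨h1, h2, h3⟩ |
      ⟨h1, h2, h3, a, b, ha1, ha2, hb1, hb2, hab⟩
    · exact Or.inl ⟨h1.symm, h2.symm, h4, h3⟩
    · exact Or.inr (Or.inl ⟨fun h => h1 h.symm, h3, h2⟩)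
    · exact Or.inr (Or.inr ⟨h1.symm, h3, h2, b, a, hb1, hb2, ha1, ha2, hab.symm⟩)
  loopless := ⟨fun v h => h.1 rfl⟩

lemma blk_card_le (r₀ k : ℕ) (hr : 0 < r₀) (b : ℕ) :
    (Finset.univ.filter (fun a : Fin (r₀ * k) => a.val / r₀ = b)).card ≤ r₀ := by
  calc (Finset.univ.filter (fun a : Fin (r₀ * k) => a.val / r₀ = b)).card
      ≤ (Finset.range r₀).card := by
        apply Finset.card_le_card_of_injOn (fun a => a.val % r₀)
        · intro a _
          simpa using Nat.mod_lt _ hr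
        · intro a ha a' ha' h
          simp only [Finset.coe_filter, Set.mem_setOf_eq] at ha ha'
          have e1 : r₀ * (a.val / r₀) + a.val % r₀ = a.val := Nat.div_add_mod _ _
          have e2 : r₀ * (a'.val / r₀) + a'.val % r₀ = a'.val := Nat.div_add_mod _ _
          dsimp only at h
          apply Fin.ext
          rw [← e1, ← e2, ha.2, ha'.2, h]
    _ = r₀ := Finset.card_range r₀

lemma blk_card_ge (r₀ k : ℕ) (hr : 0 < r₀) (b : ℕ) (hb : b < k) :
    r₀ ≤ (Finset.univ.filter (fun a : Fin (r₀ * k) => a.val / r₀ = b)).card := by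
  have hlt : ∀ i : Fin r₀, r₀ * b + i.val < r₀ * k := by
    intro i
    calc r₀ * b + i.val < r₀ * b + r₀ := by omega
      _ = r₀ * (b + 1) := by ring
      _ ≤ r₀ * k := Nat.mul_le_mul_left _ (by omega)
  calc r₀ = (Finset.univ : Finset (Fin r₀)).card := by simp
    _ ≤ _ := by
        apply Finset.card_le_card_of_injOn
          (fun i : Fin r₀ => (⟨r₀ * b + i.val, hlt i⟩ : Fin (r₀ * k)))
        · intro i _
          simp only [Finset.mem_coe, Finset.mem_filter, Finset.mem_univ, true_and]
          rw [Nat.mul_add_div hr, Nat.div_eq_of_lt i.isLt]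
          omega
        · intro i _ i' _ h
          simp only [Fin.mk.injEq] at h
          apply Fin.ext
          omega

lemma cols_lt_card_le (n m : ℕ) :
    (Finset.univ.filter (fun y : Fin n => y.val < m)).card ≤ m := by
  calc (Finset.univ.filter (fun y : Fin n => y.val < m)).card
      ≤ (Finset.range m).card := by
        apply Finset.card_le_card_of_injOn (fun y => y.val)
        · intro y hy
          simp only [Finset.mem_coe, Finset.mem_filter] at hy
          simpa using hy.2
        · intro y _ y' _ h
          exact Fin.ext h
    _ = m := Finset.card_range m

lemma cols_ge_card_le (n m : ℕ) :
    (Finset.univ.filter (fun y : Fin n => m ≤ y.val)).card ≤ n - m := by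
  calc (Finset.univ.filter (fun y : Fin n => m ≤ y.val)).card
      ≤ (Finset.range (n - m)).card := by
        apply Finset.card_le_card_of_injOn (fun y => y.val - m)
        · intro y hy
          simp only [Finset.mem_coe, Finset.mem_filter] at hy
          have := y.isLt
          simp only [Finset.mem_coe, Finset.mem_range]
          omega
        · intro y hy y' hy' h
          simp only [Finset.coe_filter, Set.mem_setOf_eq] at hy hy'
          dsimp only at h
          have := y.isLt
          have := y'.isLt
          apply Fin.ext
          omega
    _ = n - m := Finset.card_range _

lemma core_degree (r₀ k n m : ℕ) (hr : 0 < r₀)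
    (G₀ : SimpleGraph (Fin r₀ × Fin (n - m))) (v : Fin (r₀ * k) × Fin n)
    (hv : v.2.val < m) :
    (pGraph r₀ k n m G₀).degree v ≤ (r₀ - 1) * m := by
  classical
  set G := pGraph r₀ k n m G₀
  have hdeg : G.degree v = (G.neighborFinset v).card := rfl
  set X : Finset (Fin (r₀ * k)) :=
    Finset.univ.filter (fun a : Fin (r₀ * k) => a.val / r₀ = v.1.val / r₀) with hX
  set Y : Finset (Fin n) := Finset.univ.filter (fun y : Fin n => y.val < m) with hY
  have hsub : G.neighborFinset v ⊆ (X.erase v.1) ×ˢ Y := by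
    intro w hw
    rw [SimpleGraph.mem_neighborFinset] at hw
    obtain ⟨hne, h⟩ := (hw : (pGraph r₀ k n m G₀).Adj v w)
    rcases h with ⟨h1, h2, h3, h4⟩ | ⟨h1, h2, h3⟩ | ⟨h1, h2, h3, _⟩
    · rw [Finset.mem_product, Finset.mem_erase]
      refine ⟨⟨h2.symm, ?_⟩, ?_⟩
      · simp only [hX, Finset.mem_filter, Finset.mem_univ, true_and]
        exact h1.symm
      · simp only [hY, Finset.mem_filter, Finset.mem_univ, true_and]
        exact h4
    · omega
    · omega
  have hv1 : v.1 ∈ X := by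
    simp only [hX, Finset.mem_filter, Finset.mem_univ, true_and]
  calc G.degree v ≤ ((X.erase v.1) ×ˢ Y).card := by
        rw [hdeg]; exact Finset.card_le_card hsub
    _ = (X.erase v.1).card * Y.card := Finset.card_product _ _
    _ ≤ (r₀ - 1) * m := by
        have h1 : (X.erase v.1).card = X.card - 1 := Finset.card_erase_of_mem hv1
        have h2 : X.card ≤ r₀ := blk_card_le r₀ k hr _
        have h3 : Y.card ≤ m := cols_lt_card_le n m
        have : (X.erase v.1).card ≤ r₀ - 1 := by omega
        exact Nat.mul_le_mul this h3

lemma rest_degree (r₀ k n m : ℕ) (hr : 0 < r₀) (hk : 0 < k)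
    (G₀ : SimpleGraph (Fin r₀ × Fin (n - m))) (v : Fin (r₀ * k) × Fin n)
    (hv : m ≤ v.2.val) :
    (pGraph r₀ k n m G₀).degree v ≤ (r₀ * k - r₀) * (n - m) + G₀.maxDegree := by
  classical
  set G := pGraph r₀ k n m G₀ with hG
  have hdeg : G.degree v = (G.neighborFinset v).card := rfl
  set N := G.neighborFinset v with hN
  set N₁ := N.filter (fun w => w.1.val / r₀ = v.1.val / r₀) with hN₁
  set N₂ := N.filter (fun w => ¬ w.1.val / r₀ = v.1.val / r₀) with hN₂
  have hsplit : N₁.card + N₂.card = N.card :=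
    Finset.card_filter_add_card_filter_not _
  -- bound N₂
  set X' : Finset (Fin (r₀ * k)) :=
    Finset.univ.filter (fun a : Fin (r₀ * k) => ¬ a.val / r₀ = v.1.val / r₀) with hX'
  set Y' : Finset (Fin n) := Finset.univ.filter (fun y : Fin n => m ≤ y.val) with hY'
  have hsub2 : N₂ ⊆ X' ×ˢ Y' := by
    intro w hw
    simp only [hN₂, Finset.mem_filter, hN, SimpleGraph.mem_neighborFinset] at hw
    obtain ⟨⟨hne, h⟩, hblk⟩ := (hw : (pGraph r₀ k n m G₀).Adj v w ∧ _)
    rcases h with ⟨h1, _⟩ | ⟨h1, h2, h3⟩ | ⟨h1, _⟩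
    · exact absurd h1.symm hblk
    · rw [Finset.mem_product]
      constructor
      · simp only [hX', Finset.mem_filter, Finset.mem_univ, true_and]
        exact hblk
      · simp only [hY', Finset.mem_filter, Finset.mem_univ, true_and]
        exact h3
    · exact absurd h1.symm hblk
  have hbv : v.1.val / r₀ < k := by
    rw [Nat.div_lt_iff_lt_mul hr]
    exact lt_of_lt_of_eq v.1.isLt (Nat.mul_comm r₀ k)
  have hX'card : X'.card ≤ r₀ * k - r₀ := by
    have hsum : (Finset.univ.filter
        (fun a : Fin (r₀ * k) => a.val / r₀ = v.1.val / r₀)).card + X'.card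
        = r₀ * k := by
      rw [hX']
      rw [Finset.card_filter_add_card_filter_not]
      simp
    have := blk_card_ge r₀ k hr (v.1.val / r₀) hbv
    omega
  have hN₂card : N₂.card ≤ (r₀ * k - r₀) * (n - m) := by
    calc N₂.card ≤ (X' ×ˢ Y').card := Finset.card_le_card hsub2
      _ = X'.card * Y'.card := Finset.card_product _ _
      _ ≤ (r₀ * k - r₀) * (n - m) := Nat.mul_le_mul hX'card (cols_ge_card_le n m)
  -- bound N₁
  have hN₁card : N₁.card ≤ G₀.maxDegree := by
    rcases N₁.eq_empty_or_nonempty with h | ⟨w₀, hw₀⟩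
    · simp [h]
    · -- extract facts about members of N₁
      have hmem : ∀ w ∈ N₁, w.1.val / r₀ = v.1.val / r₀ ∧ m ≤ w.2.val ∧
          ∃ a b : Fin r₀ × Fin (n - m),
            a.1.val = v.1.val % r₀ ∧ a.2.val = v.2.val - m ∧
            b.1.val = w.1.val % r₀ ∧ b.2.val = w.2.val - m ∧ G₀.Adj a b := by
        intro w hw
        simp only [hN₁, Finset.mem_filter, hN, SimpleGraph.mem_neighborFinset] at hw
        obtain ⟨⟨hne, h⟩, hblk⟩ := (hw : (pGraph r₀ k n m G₀).Adj v w ∧ _)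
        rcases h with ⟨_, _, h3, _⟩ | ⟨h1, _⟩ | ⟨h1, h2, h3, hab⟩
        · omega
        · exact absurd hblk.symm h1
        · exact ⟨hblk, h3, hab⟩
      obtain ⟨_, _, a₀, b₀, ha₀1, ha₀2, _, _, _⟩ := hmem w₀ hw₀
      have hp : 0 < n - m := b₀.2.isLt.trans_le' (Nat.zero_le _) |>.trans_le (le_refl _)
      -- total function to G₀'s vertices
      have hp' : 0 < n - m := lt_of_le_of_lt (Nat.zero_le _) b₀.2.isLt
      set f : Fin (r₀ * k) × Fin n → Fin r₀ × Fin (n - m) :=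
        fun w => (⟨w.1.val % r₀, Nat.mod_lt _ hr⟩,
                  ⟨(w.2.val - m) % (n - m), Nat.mod_lt _ hp'⟩) with hf
      calc N₁.card ≤ (G₀.neighborFinset a₀).card := by
            apply Finset.card_le_card_of_injOn f
            · intro w hw
              obtain ⟨hblk, hwrest, a, b, ha1, ha2, hb1, hb2, hab⟩ := hmem w hw
              have haeq : a = a₀ := by
                apply Prod.ext
                · exact Fin.ext (by rw [ha1, ha₀1])
                · exact Fin.ext (by rw [ha2, ha₀2])
              have hbeq : b = f w := by
                have h2lt : w.2.val - m < n - m := by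
                  have := w.2.isLt; omega
                apply Prod.ext
                · apply Fin.ext
                  simp only [hf, hb1]
                · apply Fin.ext
                  simp only [hf, hb2, Nat.mod_eq_of_lt h2lt]
              rw [Finset.mem_coe, SimpleGraph.mem_neighborFinset]
              rw [← haeq, ← hbeq]
              exact hab
            · intro w hw w' hw' heq
              obtain ⟨hblk, hwrest, _⟩ := hmem w hw
              obtain ⟨hblk', hwrest', _⟩ := hmem w' hw'
              simp only [hf, Prod.mk.injEq, Fin.mk.injEq] at heq
              have hwlt := w.2.isLt
              have hwlt' := w'.2.isLt
              have h2 : w.2.val = w'.2.val := by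
                have e1 : (w.2.val - m) % (n - m) = w.2.val - m :=
                  Nat.mod_eq_of_lt (by omega)
                have e2 : (w'.2.val - m) % (n - m) = w'.2.val - m :=
                  Nat.mod_eq_of_lt (by omega)
                omega
              have h1 : w.1.val = w'.1.val := by
                have e1 : r₀ * (w.1.val / r₀) + w.1.val % r₀ = w.1.val :=
                  Nat.div_add_mod _ _
                have e2 : r₀ * (w'.1.val / r₀) + w'.1.val % r₀ = w'.1.val :=
                  Nat.div_add_mod _ _
                rw [← e1, ← e2, hblk, hblk', heq.1]
              exact Prod.ext (Fin.ext h1) (Fin.ext h2)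
        _ = G₀.degree a₀ := rfl
        _ ≤ G₀.maxDegree := G₀.degree_le_maxDegree a₀
  rw [hdeg, ← hsplit]
  calc N₁.card + N₂.card ≤ G₀.maxDegree + (r₀ * k - r₀) * (n - m) :=
        Nat.add_le_add hN₁card hN₂card
    _ = (r₀ * k - r₀) * (n - m) + G₀.maxDegree := Nat.add_comm _ _

lemma no_cross (r₀ t₀ k n m : ℕ) (hr : 0 < r₀) (ht : 1 ≤ t₀)
    (G₀ : SimpleGraph (Fin r₀ × Fin (n - m)))
    (hG₀ : ¬∃ s : Finset (Fin r₀ × Fin (n - m)), s.card = t₀ ∧ CrossIndep G₀ s) :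
    ¬∃ s : Finset (Fin (r₀ * k) × Fin n),
      s.card = k + t₀ ∧ CrossIndep (pGraph r₀ k n m G₀) s := by
  classical
  rintro ⟨s, hcard, hs⟩
  set G := pGraph r₀ k n m G₀ with hG
  set sc := s.filter (fun w => w.2.val < m) with hsc
  set sr := s.filter (fun w => ¬ w.2.val < m) with hsr
  have hsplit : sc.card + sr.card = s.card :=
    Finset.card_filter_add_card_filter_not _
  -- at most one core per block
  have hsccard : sc.card ≤ k := by
    calc sc.card ≤ (Finset.range k).card := by
          apply Finset.card_le_card_of_injOn (fun w => w.1.val / r₀)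
          · intro w _
            simp only [Finset.mem_coe, Finset.mem_range]
            rw [Nat.div_lt_iff_lt_mul hr]
            exact lt_of_lt_of_eq w.1.isLt (Nat.mul_comm r₀ k)
          · intro w hw w' hw' heq
            simp only [hsc, Finset.coe_filter, Set.mem_setOf_eq] at hw hw'
            dsimp only at heq
            by_contra hne
            obtain ⟨hnadj, hfst⟩ := hs w hw.1 w' hw'.1 hne
            exact hnadj (show (pGraph r₀ k n m G₀).Adj w w' from ⟨hne, Or.inl ⟨heq, hfst, hw.2, hw'.2⟩⟩)
      _ = k := Finset.card_range k
  -- rests : at most t₀ - 1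
  have hsrcard : sr.card ≤ t₀ - 1 := by
    by_contra hco
    have hsr' : t₀ ≤ sr.card := by omega
    obtain ⟨s', hs's, hs'card⟩ := Finset.exists_subset_card_eq hsr'
    have hs'ne : s'.Nonempty := by
      rw [← Finset.card_pos, hs'card]; omega
    obtain ⟨w₀, hw₀⟩ := hs'ne
    have hrest : ∀ w ∈ s', m ≤ w.2.val ∧ w ∈ s := by
      intro w hw
      have h := hs's hw
      simp only [hsr, Finset.mem_filter] at h
      exact ⟨by omega, h.1⟩
    have hp : 0 < n - m := by
      have h1 := (hrest w₀ hw₀).1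
      have := w₀.2.isLt
      omega
    have hsame : ∀ w ∈ s', w.1.val / r₀ = w₀.1.val / r₀ := by
      intro w hw
      by_contra hne
      have hwne : w ≠ w₀ := by
        intro h; rw [h] at hne; exact hne rfl
      obtain ⟨hnadj, _⟩ := hs w (hrest w hw).2 w₀ (hrest w₀ hw₀).2 hwne
      exact hnadj (show (pGraph r₀ k n m G₀).Adj w w₀ from ⟨hwne, Or.inr (Or.inl ⟨hne, (hrest w hw).1, (hrest w₀ hw₀).1⟩)⟩)
    set f : Fin (r₀ * k) × Fin n → Fin r₀ × Fin (n - m) :=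
      fun w => (⟨w.1.val % r₀, Nat.mod_lt _ hr⟩,
                ⟨(w.2.val - m) % (n - m), Nat.mod_lt _ hp⟩) with hf
    have hfinj : Set.InjOn f s' := by
      intro w hw w' hw' heq
      simp only [hf, Prod.mk.injEq, Fin.mk.injEq] at heq
      have h1 := (hrest w hw).1
      have h1' := (hrest w' hw').1
      have hlt := w.2.isLt
      have hlt' := w'.2.isLt
      have e1 : (w.2.val - m) % (n - m) = w.2.val - m := Nat.mod_eq_of_lt (by omega)
      have e2 : (w'.2.val - m) % (n - m) = w'.2.val - m := Nat.mod_eq_of_lt (by omega)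
      have hb := hsame w hw
      have hb' := hsame w' hw'
      have d1 : r₀ * (w.1.val / r₀) + w.1.val % r₀ = w.1.val := Nat.div_add_mod _ _
      have d2 : r₀ * (w'.1.val / r₀) + w'.1.val % r₀ = w'.1.val := Nat.div_add_mod _ _
      have hv1 : w.1.val = w'.1.val := by rw [← d1, ← d2, hb, hb', heq.1]
      exact Prod.ext (Fin.ext hv1) (Fin.ext (by omega))
    apply hG₀
    refine ⟨s'.image f, ?_, ?_⟩
    · rw [Finset.card_image_of_injOn hfinj, hs'card]
    · intro a ha b hb hab
      obtain ⟨w, hw, rfl⟩ := Finset.mem_image.mp ha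
      obtain ⟨w', hw', rfl⟩ := Finset.mem_image.mp hb
      have hwne : w ≠ w' := fun h => hab (by rw [h])
      obtain ⟨hnadj, hfst⟩ := hs w (hrest w hw).2 w' (hrest w' hw').2 hwne
      constructor
      · intro hadj
        apply hnadj
        show (pGraph r₀ k n m G₀).Adj w w'
        refine ⟨hwne, Or.inr (Or.inr ⟨?_, (hrest w hw).1, (hrest w' hw').1,
          f w, f w', by simp only [hf], ?_, by simp only [hf], ?_, hadj⟩)⟩
        · rw [hsame w hw, hsame w' hw']
        · simp only [hf]
          exact Nat.mod_eq_of_lt (by have := w.2.isLt; have := (hrest w hw).1; omega)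
        · simp only [hf]
          exact Nat.mod_eq_of_lt (by have := w'.2.isLt; have := (hrest w' hw').1; omega)
      · intro hfsteq
        apply hfst
        have hmv : w.1.val % r₀ = w'.1.val % r₀ := congrArg Fin.val hfsteq
        have d1 : r₀ * (w.1.val / r₀) + w.1.val % r₀ = w.1.val := Nat.div_add_mod _ _
        have d2 : r₀ * (w'.1.val / r₀) + w'.1.val % r₀ = w'.1.val := Nat.div_add_mod _ _
        apply Fin.ext
        rw [← d1, ← d2, hsame w hw, hsame w' hw', hmv]
  omega

set_option maxHeartbeats 1000000 in
/-- Proposition 7.1: suppose for every `n₀ ≥ 1` there is an `r₀`-partite graph with parts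
of size `n₀`, maximum degree at most `Δ₀·n₀`, and no crossing independent set of size `t₀`.
Then for all `n, k ≥ 2`, with `r = r₀k` and `t = k + t₀`, there is an `r`-partite graph `G`
with parts of size `n`, no crossing independent set of size `t`, and
`Δ(G) ≤ (r₀-1)·⌈((Δ₀+(k-1)r₀)/(Δ₀+kr₀-1))·n⌉`. -/
theorem stmt18 (r₀ t₀ : ℕ) (ht₀ : 2 ≤ t₀) (htr : t₀ ≤ r₀) (Δ₀ : ℝ) (hΔ₀ : 0 ≤ Δ₀)
    (hyp : ∀ n₀ : ℕ, 1 ≤ n₀ → ∃ G₀ : SimpleGraph (Fin r₀ × Fin n₀),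
      (G₀.maxDegree : ℝ) ≤ Δ₀ * n₀ ∧
      ¬∃ s : Finset (Fin r₀ × Fin n₀), s.card = t₀ ∧ CrossIndep G₀ s)
    (n k : ℕ) (hn : 2 ≤ n) (hk : 2 ≤ k) :
    ∃ G : SimpleGraph (Fin (r₀ * k) × Fin n),
      (¬∃ s : Finset (Fin (r₀ * k) × Fin n), s.card = k + t₀ ∧ CrossIndep G s) ∧
      (G.maxDegree : ℝ) ≤ ((r₀ : ℝ) - 1) *
        (⌈(Δ₀ + ((k : ℝ) - 1) * r₀) / (Δ₀ + (k : ℝ) * r₀ - 1) * n⌉ : ℤ) := by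
  classical
  have hr₀2 : 2 ≤ r₀ := le_trans ht₀ htr
  have hr : 0 < r₀ := by omega
  set A : ℝ := Δ₀ + ((k : ℝ) - 1) * r₀ with hA
  set q : ℝ := Δ₀ + (k : ℝ) * r₀ - 1 with hq
  have hr1 : (2:ℝ) ≤ (r₀:ℝ) := by exact_mod_cast hr₀2
  have hk2 : (2:ℝ) ≤ (k:ℝ) := by exact_mod_cast hk
  have hA0 : 0 ≤ A := by rw [hA]; nlinarith
  have hq0 : 0 < q := by rw [hq]; nlinarith
  have hqne : q ≠ 0 := ne_of_gt hq0
  have hAq : A ≤ q := by rw [hA, hq]; nlinarith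
  set M : ℤ := ⌈A / q * n⌉ with hM
  have hMA : A / q * n ≤ (M : ℝ) := Int.le_ceil _
  have hM0 : 0 ≤ M :=
    Int.ceil_nonneg (mul_nonneg (div_nonneg hA0 hq0.le) (Nat.cast_nonneg n))
  have hMn : M ≤ (n : ℤ) := by
    rw [hM]
    apply Int.ceil_le.mpr
    push_cast
    calc A / q * n ≤ 1 * n := by
          apply mul_le_mul_of_nonneg_right _ (Nat.cast_nonneg n)
          exact (div_le_one hq0).mpr hAq
      _ = n := one_mul _
  set m : ℕ := M.toNat with hm
  have hmM : (m : ℤ) = M := Int.toNat_of_nonneg hM0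
  have hmn : m ≤ n := by omega
  have hmR : (m : ℝ) = (M : ℝ) := by exact_mod_cast hmM
  obtain ⟨G₀, hG₀deg, hG₀cross⟩ : ∃ G₀ : SimpleGraph (Fin r₀ × Fin (n - m)),
      (G₀.maxDegree : ℝ) ≤ Δ₀ * ((n - m : ℕ) : ℝ) ∧
      ¬∃ s : Finset (Fin r₀ × Fin (n - m)), s.card = t₀ ∧ CrossIndep G₀ s := by
    rcases Nat.eq_zero_or_pos (n - m) with h0 | h1
    · refine ⟨⊥, ?_, ?_⟩
      · have h2 : ((n - m : ℕ) : ℝ) = 0 := by rw [h0]; norm_num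
        rw [h2, mul_zero]
        have h4 : (0:ℝ) = ((0:ℕ):ℝ) := by norm_num
        rw [h4]
        apply Nat.cast_le.mpr
        have h3 : (⊥ : SimpleGraph (Fin r₀ × Fin (n - m))).maxDegree ≤ 0 :=
          SimpleGraph.maxDegree_le_of_forall_degree_le _ 0
            (fun v => absurd v.2.isLt (by omega))
        convert h3 using 2
      · rintro ⟨s, hcard, -⟩
        have hle : s.card ≤ Fintype.card (Fin r₀ × Fin (n - m)) := Finset.card_le_univ s
        rw [Fintype.card_prod, Fintype.card_fin, Fintype.card_fin] at hle
        have h4 : r₀ * (n - m) = 0 := by rw [h0, Nat.mul_zero]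
        omega
    · exact hyp (n - m) h1
  refine ⟨pGraph r₀ k n m G₀, ?_, ?_⟩
  · exact no_cross r₀ t₀ k n m hr (by omega) G₀ hG₀cross
  · have key : A * n ≤ (M : ℝ) * q := by
      have h2 := mul_le_mul_of_nonneg_right hMA hq0.le
      have h3 : A / q * (n : ℝ) * q = A * n := by
        rw [div_mul_eq_mul_div, div_mul_cancel₀ _ hqne]
      rw [← h3]
      exact h2
    have hMq : (M : ℝ) * q = (M : ℝ) * A + (M : ℝ) * ((r₀ : ℝ) - 1) := by
      rw [hq, hA]; ring
    have hnm : ((n - m : ℕ) : ℝ) = (n : ℝ) - (M : ℝ) := by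
      rw [Nat.cast_sub hmn, hmR]
    have hrle : r₀ ≤ r₀ * k := by
      calc r₀ = r₀ * 1 := (mul_one r₀).symm
        _ ≤ r₀ * k := Nat.mul_le_mul_left _ (by omega)
    have hrk : ((r₀ * k - r₀ : ℕ) : ℝ) = ((k:ℝ) - 1) * (r₀:ℝ) := by
      rw [Nat.cast_sub hrle]
      push_cast
      ring
    have hvdeg : ∀ v : Fin (r₀ * k) × Fin n,
        ((pGraph r₀ k n m G₀).degree v : ℝ) ≤ ((r₀ : ℝ) - 1) * M := by
      intro v
      by_cases hv : v.2.val < m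
      · have h1 := core_degree r₀ k n m hr G₀ v hv
        calc ((pGraph r₀ k n m G₀).degree v : ℝ) ≤ (((r₀ - 1) * m : ℕ) : ℝ) := by
              exact_mod_cast h1
          _ = ((r₀ : ℝ) - 1) * M := by
              rw [Nat.cast_mul, Nat.cast_sub (by omega : 1 ≤ r₀), hmR]
              norm_num
      · push_neg at hv
        have h1 := rest_degree r₀ k n m hr (by omega) G₀ v hv
        calc ((pGraph r₀ k n m G₀).degree v : ℝ)
            ≤ (((r₀ * k - r₀) * (n - m) + G₀.maxDegree : ℕ) : ℝ) := by exact_mod_cast h1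
          _ = ((k:ℝ) - 1) * (r₀:ℝ) * (((n - m : ℕ)) : ℝ) + (G₀.maxDegree : ℝ) := by
              rw [Nat.cast_add, Nat.cast_mul, hrk]
          _ ≤ ((k:ℝ) - 1) * (r₀:ℝ) * (((n - m : ℕ)) : ℝ) + Δ₀ * ((n - m : ℕ) : ℝ) :=
              (add_le_add_iff_left _).mpr hG₀deg
          _ = A * ((n:ℝ) - (M:ℝ)) := by rw [hnm, hA]; ring
          _ ≤ ((r₀ : ℝ) - 1) * M := by nlinarith [key, hMq]
    haveI : Nonempty (Fin (r₀ * k) × Fin n) :=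
      ⟨(⟨0, Nat.mul_pos hr (by omega)⟩, ⟨0, by omega⟩)⟩
    obtain ⟨v, hv⟩ := (pGraph r₀ k n m G₀).exists_maximal_degree_vertex
    rw [hv]
    exact hvdeg v
end
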